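/- arXiv:1104.4992 — 7 statements merged into one kernel-verified Lean document; each statement's English description precedes it below -/
import Mathlib

section
/- Let N ≥ 1, let 𝒞 be a finite set of vectors in ℝ^N, let D ⊆ ℝ^N, let (x_n) be a sequence of points of D with all coordinates strictly positive, and let f : D × 𝒞 → ℝ_{>0}. Then there exists a subsequence (x_{n_j}) of (x_n) along which 𝒞 is partitioned with respect to f; that is, there exist a partition T_1, …, T_P of 𝒞 and a constant C > 1 such that: (i) if y, z ∈ T_i for some i, then (1/C)·f(x_{n_j}, y) ≤ f(x_{n_j}, z) ≤ C·f(x_{n_j}, y) for all j; and (ii) if y ∈ T_i and z ∈ T_{i+m} for some m ≥ 1, then f(x_{n_j}, y)/f(x_{n_j}, z) → ∞ as j → ∞. -/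
open Filter

/-- For `u ∈ ℝ^N_{>0}` and `v ∈ ℝ^N`, `u^v := ∏ i, u_i ^ v_i` (real exponents). -/
noncomputable def vpow {N : ℕ} (u v : Fin N → ℝ) : ℝ := ∏ i, u i ^ v i

/-- `T : Fin P → Finset (Fin N → ℝ)` is a partition of `C` into (nonempty) tiers. -/
def IsTierPartition {N : ℕ} (C : Finset (Fin N → ℝ)) {P : ℕ}
    (T : Fin P → Finset (Fin N → ℝ)) : Prop :=
  (∀ i, (T i).Nonempty) ∧
  (∀ i j, i ≠ j → ∀ y, y ∈ T i → y ∉ T j) ∧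
  (∀ y, y ∈ C ↔ ∃ i, y ∈ T i)

/-- `C` is partitioned along the sequence `x` with respect to `f`, with tiers `T` and
constant `c > 1`:  within a tier the values of `f` are comparable up to the factor `c`
uniformly in `n`, and values in a higher tier (smaller index) dominate those in lower
tiers in the limit. -/
def PartitionedAlongWith {N : ℕ} (C : Finset (Fin N → ℝ)) (x : ℕ → Fin N → ℝ)
    (f : (Fin N → ℝ) → (Fin N → ℝ) → ℝ) {P : ℕ}
    (T : Fin P → Finset (Fin N → ℝ)) (c : ℝ) : Prop :=
  IsTierPartition C T ∧ 1 < c ∧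
  (∀ i, ∀ y ∈ T i, ∀ z ∈ T i, ∀ n,
      (1 / c) * f (x n) y ≤ f (x n) z ∧ f (x n) z ≤ c * f (x n) y) ∧
  (∀ i j : Fin P, i < j → ∀ y ∈ T i, ∀ z ∈ T j,
      Tendsto (fun n => f (x n) y / f (x n) z) atTop atTop)

/-- `C` is partitioned along `x` (with respect to `f(x, y) = x^y`). -/
noncomputable def PartitionedAlong {N : ℕ} (C : Finset (Fin N → ℝ)) (x : ℕ → Fin N → ℝ)
    {P : ℕ} (T : Fin P → Finset (Fin N → ℝ)) (c : ℝ) : Prop :=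
  PartitionedAlongWith C x (fun u v => vpow u v) T c

/-- **Lemma (existence of a partitioning subsequence).**
Let `N ≥ 1`, let `𝒞` be a finite set of vectors in `ℝ^N`, let `D ⊆ ℝ^N`, let `(x_n)` be a
sequence of points of `D` with all coordinates strictly positive, and let
`f : D × 𝒞 → ℝ_{>0}`.  Then there is a subsequence of `(x_n)` along which `𝒞` is
partitioned with respect to `f`. -/
theorem exists_subsequence_partitionedAlongWith
    {N : ℕ} (hN : 1 ≤ N) (C : Finset (Fin N → ℝ)) (D : Set (Fin N → ℝ))
    (x : ℕ → Fin N → ℝ) (hxD : ∀ n, x n ∈ D) (hxpos : ∀ n i, 0 < x n i)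
    (f : (Fin N → ℝ) → (Fin N → ℝ) → ℝ)
    (hf : ∀ z ∈ D, ∀ y ∈ C, 0 < f z y) :
    ∃ φ : ℕ → ℕ, StrictMono φ ∧
      ∃ (P : ℕ) (T : Fin P → Finset (Fin N → ℝ)) (c : ℝ),
        PartitionedAlongWith C (fun j => x (φ j)) f T c := by
  classical
  rcases C.eq_empty_or_nonempty with hC | hC
  · refine ⟨id, strictMono_id, 0, Fin.elim0, 2,
      ⟨fun i => i.elim0, fun i => i.elim0, fun y => ?_⟩, by norm_num,
      fun i => i.elim0, fun i => i.elim0⟩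
    simp only [hC, Finset.notMem_empty, false_iff]
    exact fun ⟨i, _⟩ => i.elim0
  -- positivity of f along the sequence
  have hpos : ∀ n (y : {v // v ∈ C}), 0 < f (x n) y.1 := fun n y => hf (x n) (hxD n) y.1 y.2
  -- extract a subsequence along which all pairwise ratios converge in ℝ≥0∞
  set F : ℕ → ({v // v ∈ C} × {v // v ∈ C} → ENNReal) :=
    fun n p => ENNReal.ofReal (f (x n) p.1.1 / f (x n) p.2.1) with hF
  obtain ⟨L, -, φ, hφ, hconv⟩ :=
    isCompact_univ.tendsto_subseq (x := F) (fun n => Set.mem_univ _)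
  refine ⟨φ, hφ, ?_⟩
  -- the ratio sequences
  set g : {v // v ∈ C} → {v // v ∈ C} → ℕ → ℝ :=
    fun y z n => f (x (φ n)) y.1 / f (x (φ n)) z.1 with hgdef
  have hgpos : ∀ y z n, 0 < g y z n := fun y z n => div_pos (hpos _ y) (hpos _ z)
  have hL : ∀ y z : {v // v ∈ C},
      Tendsto (fun n => ENNReal.ofReal (g y z n)) atTop (nhds (L (y, z))) := by
    intro y z
    have := tendsto_pi_nhds.mp hconv (y, z)
    exact this
  -- basic facts about the limits L
  have hdiag : ∀ y, L (y, y) = 1 := by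
    intro y
    refine tendsto_nhds_unique (hL y y) ?_
    have : (fun n => ENNReal.ofReal (g y y n)) = fun _ => 1 := by
      funext n
      rw [hgdef]
      simp [div_self (hpos _ y).ne']
    rw [this]
    exact tendsto_const_nhds
  have hinv : ∀ y z, L (z, y) = (L (y, z))⁻¹ := by
    intro y z
    refine tendsto_nhds_unique (hL z y) ?_
    have heq : (fun n => ENNReal.ofReal (g z y n)) =
        fun n => (ENNReal.ofReal (g y z n))⁻¹ := by
      funext n
      rw [hgdef]
      simp only
      rw [← ENNReal.ofReal_inv_of_pos (hgpos y z n)]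
      congr 1
      rw [hgdef, inv_div]
    rw [heq]
    exact (hL y z).inv
  have hmul : ∀ y w z, (L (y, w) ≠ 0 ∨ L (w, z) ≠ ⊤) → (L (w, z) ≠ 0 ∨ L (y, w) ≠ ⊤) →
      L (y, z) = L (y, w) * L (w, z) := by
    intro y w z h1 h2
    refine tendsto_nhds_unique (hL y z) ?_
    have heq : (fun n => ENNReal.ofReal (g y z n)) =
        fun n => ENNReal.ofReal (g y w n) * ENNReal.ofReal (g w z n) := by
      funext n
      rw [← ENNReal.ofReal_mul (hgpos y w n).le]
      have hw := (hpos (φ n) w).ne'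
      congr 1
      rw [hgdef]
      simp only
      rw [div_mul_div_comm, mul_comm (f (x (φ n)) y.1), mul_div_mul_left _ _ hw]
    rw [heq]
    exact ENNReal.Tendsto.mul (hL y w) h1 (hL w z) h2
  -- domination is transitive-like
  have htop1 : ∀ y w z, L (y, w) = ⊤ → L (w, z) ≠ 0 → L (y, z) = ⊤ := by
    intro y w z h1 h2
    rw [hmul y w z (Or.inl (h1 ▸ ENNReal.top_ne_zero)) (Or.inl h2), h1, ENNReal.top_mul h2]
  have htop2 : ∀ y w z, L (w, z) = ⊤ → L (y, w) ≠ 0 → L (y, w) ≠ ⊤ → L (y, z) = ⊤ := by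
    intro y w z h1 h2 h3
    rw [hmul y w z (Or.inl h2) (Or.inr h3), h1, ENNReal.mul_top h2]
  -- the rank function: number of elements strictly dominating y
  set s : {v // v ∈ C} → ℕ :=
    fun y => (Finset.univ.filter fun w => L (w, y) = ⊤).card with hsdef
  have hs_set_eq : ∀ y z, L (y, z) ≠ 0 → L (y, z) ≠ ⊤ → s y = s z := by
    intro y z h0 ht
    have hfe : (Finset.univ.filter fun w => L (w, y) = ⊤)
        = (Finset.univ.filter fun w => L (w, z) = ⊤) := by
      apply Finset.filter_congr
      intro w _
      constructor
      · intro hw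
        exact htop1 w y z hw h0
      · intro hw
        have hzy0 : L (z, y) ≠ 0 := by
          rw [hinv]
          simp [ht]
        exact htop1 w z y hw hzy0
    show (Finset.univ.filter fun w => L (w, y) = ⊤).card
        = (Finset.univ.filter fun w => L (w, z) = ⊤).card
    rw [hfe]
  have hs_lt : ∀ y z, L (y, z) = ⊤ → s y < s z := by
    intro y z h
    apply Finset.card_lt_card
    constructor
    · intro w hw
      simp only [Finset.mem_filter, Finset.mem_univ, true_and] at hw ⊢
      exact htop1 w y z hw (h ▸ ENNReal.top_ne_zero)
    · intro hsub
      have := hsub (Finset.mem_filter.mpr ⟨Finset.mem_univ y, h⟩)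
      simp only [Finset.mem_filter, hdiag] at this
      exact ENNReal.one_ne_top this.2
  -- trichotomy: s y < s z iff L (y,z) = ⊤
  have hs_iff : ∀ y z, s y < s z ↔ L (y, z) = ⊤ := by
    intro y z
    constructor
    · intro hlt
      by_contra ht
      rcases eq_or_ne (L (y, z)) 0 with h0 | h0
      · have : L (z, y) = ⊤ := by rw [hinv, h0]; simp
        exact absurd (hs_lt z y this) (by omega)
      · exact absurd (hs_set_eq y z h0 ht) (by omega)
    · exact hs_lt y z
  -- the tiers
  set V : Finset ℕ := Finset.univ.image s with hV
  set l : List ℕ := V.sort (· ≤ ·) with hl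
  have hlen : l.length = V.card := Finset.length_sort _
  refine ⟨V.card, fun i => C.filter (fun v => ∃ h : v ∈ C, s ⟨v, h⟩ = l.get (Fin.cast hlen.symm i)), ?_⟩
  have hnodup : l.Nodup := Finset.sort_nodup _ _
  have hsorted : l.SortedLT := Finset.sortedLT_sort _
  have hmemT : ∀ (i) (v), v ∈ C.filter (fun v => ∃ h : v ∈ C, s ⟨v, h⟩ = l.get (Fin.cast hlen.symm i)) ↔
      ∃ h : v ∈ C, s ⟨v, h⟩ = l.get (Fin.cast hlen.symm i) := by
    intro i v
    simp only [Finset.mem_filter]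
    exact ⟨fun h => h.2, fun h => ⟨h.1, h⟩⟩
  -- the uniform comparability constant
  have hMex : ∀ p : {v // v ∈ C} × {v // v ∈ C}, ∃ M : ℝ,
      L p ≠ ⊤ → ∀ n, g p.1 p.2 n ≤ M := by
    intro p
    rcases eq_or_ne (L p) ⊤ with h | h
    · exact ⟨0, fun h' => absurd h h'⟩
    · have htend : Tendsto (fun n => g p.1 p.2 n) atTop (nhds (L p).toReal) := by
        have := (ENNReal.tendsto_toReal h).comp (hL p.1 p.2)
        simpa [Function.comp_def, ENNReal.toReal_ofReal (hgpos p.1 p.2 _).le,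
          (show (p.1, p.2) = p from rfl)] using this
      obtain ⟨M, hM⟩ := htend.bddAbove_range
      exact ⟨M, fun _ n => hM (Set.mem_range_self n)⟩
  choose M hM using hMex
  set c : ℝ := 2 + ∑ p : {v // v ∈ C} × {v // v ∈ C}, |M p| with hc
  have hsum_nonneg : (0:ℝ) ≤ ∑ p : {v // v ∈ C} × {v // v ∈ C}, |M p| :=
    Finset.sum_nonneg fun p _ => abs_nonneg _
  have hc1 : 1 < c := by rw [hc]; linarith
  have hcpos : 0 < c := by linarith
  have hbound : ∀ y z : {v // v ∈ C}, L (y, z) ≠ ⊤ → ∀ n, g y z n ≤ c := by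
    intro y z h n
    have h1 : M (y, z) ≤ |M (y, z)| := le_abs_self _
    have h2 : |M (y, z)| ≤ ∑ p : {v // v ∈ C} × {v // v ∈ C}, |M p| :=
      Finset.single_le_sum (fun p _ => abs_nonneg (M p)) (Finset.mem_univ _)
    calc g y z n ≤ M (y, z) := hM (y, z) h n
      _ ≤ c := by rw [hc]; linarith
  refine ⟨c, ⟨?_, ?_, ?_⟩, hc1, ?_, ?_⟩
  · -- tiers nonempty
    intro i
    have hmeml : l.get (Fin.cast hlen.symm i) ∈ l := l.get_mem (Fin.cast hlen.symm i)
    have hmemV : l.get (Fin.cast hlen.symm i) ∈ V :=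
      (Finset.mem_sort (α := ℕ) (· ≤ ·)).mp hmeml
    obtain ⟨y, -, hy⟩ := Finset.mem_image.mp hmemV
    exact ⟨y.1, (hmemT i y.1).mpr ⟨y.2, by rwa [Subtype.eta]⟩⟩
  · -- tiers disjoint
    intro i j hij v hvi hvj
    obtain ⟨h1, hv1⟩ := (hmemT i v).mp hvi
    obtain ⟨h2, hv2⟩ := (hmemT j v).mp hvj
    have : l.get (Fin.cast hlen.symm i) = l.get (Fin.cast hlen.symm j) := by
      rw [← hv1, ← hv2]
    have h3 := (hnodup.get_inj_iff).mp this
    apply hij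
    have h4 : ((Fin.cast hlen.symm i) : ℕ) = ((Fin.cast hlen.symm j) : ℕ) :=
      congrArg Fin.val h3
    simp only [Fin.coe_cast] at h4
    exact Fin.ext h4
  · -- tiers cover C
    intro v
    constructor
    · intro hv
      have hmem : s ⟨v, hv⟩ ∈ V := Finset.mem_image.mpr ⟨⟨v, hv⟩, Finset.mem_univ _, rfl⟩
      have hmem' : s ⟨v, hv⟩ ∈ l := (Finset.mem_sort (α := ℕ) (· ≤ ·)).mpr hmem
      obtain ⟨k, hk⟩ := List.mem_iff_get.mp hmem'
      refine ⟨Fin.cast hlen k, (hmemT _ v).mpr ⟨hv, hk.symm⟩⟩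
    · rintro ⟨i, hi⟩
      exact (Finset.mem_filter.mp hi).1
  · -- comparability within tiers
    intro i y hy z hz n
    obtain ⟨hyC, hys⟩ := (hmemT i y).mp hy
    obtain ⟨hzC, hzs⟩ := (hmemT i z).mp hz
    have hseq : s ⟨y, hyC⟩ = s ⟨z, hzC⟩ := by rw [hys, hzs]
    have hyz : L (⟨y, hyC⟩, ⟨z, hzC⟩) ≠ ⊤ := by
      intro h
      exact absurd (hs_lt _ _ h) (by omega)
    have hzy : L (⟨z, hzC⟩, ⟨y, hyC⟩) ≠ ⊤ := by
      intro h
      exact absurd (hs_lt _ _ h) (by omega)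
    have hb1 : g ⟨y, hyC⟩ ⟨z, hzC⟩ n ≤ c := hbound _ _ hyz n
    have hb2 : g ⟨z, hzC⟩ ⟨y, hyC⟩ n ≤ c := hbound _ _ hzy n
    have hfy : 0 < f (x (φ n)) y := hpos _ ⟨y, hyC⟩
    have hfz : 0 < f (x (φ n)) z := hpos _ ⟨z, hzC⟩
    rw [hgdef] at hb1 hb2
    simp only at hb1 hb2
    constructor
    · rw [div_le_iff₀ hfz] at hb1
      rw [div_mul_eq_mul_div, div_le_iff₀ hcpos] at *
      nlinarith
    · rw [div_le_iff₀ hfy] at hb2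
      linarith
  · -- domination between tiers
    intro i j hij y hy z hz
    obtain ⟨hyC, hys⟩ := (hmemT i y).mp hy
    obtain ⟨hzC, hzs⟩ := (hmemT j z).mp hz
    have hik : (Fin.cast hlen.symm i) < (Fin.cast hlen.symm j) := hij
    have hlt : s ⟨y, hyC⟩ < s ⟨z, hzC⟩ := by
      rw [hys, hzs]
      exact hsorted.strictMono_get hik
    have htop : L (⟨y, hyC⟩, ⟨z, hzC⟩) = ⊤ := (hs_iff _ _).mp hlt
    have htend := hL ⟨y, hyC⟩ ⟨z, hzC⟩
    rw [htop] at htend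
    rw [tendsto_atTop]
    intro b
    obtain ⟨k, hk⟩ := exists_nat_ge b
    filter_upwards [ENNReal.tendsto_nhds_top_iff_nat.mp htend k] with n hn
    have : (k : ℝ) < g ⟨y, hyC⟩ ⟨z, hzC⟩ n := by
      rw [show ((k : ENNReal) = ENNReal.ofReal (k : ℝ)) by simp] at hn
      exact (ENNReal.ofReal_lt_ofReal_iff_of_nonneg (Nat.cast_nonneg k)).mp hn
    have hgg : g ⟨y, hyC⟩ ⟨z, hzC⟩ n = f (x (φ n)) y / f (x (φ n)) z := rfl
    rw [hgg] at this
    linarith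
end

section
/- (Stiemke's Theorem) Let u_1, …, u_n ∈ ℝ^m. Then exactly one of the following holds: (a) there exists c ∈ ℝ^n such that (Σ_{i=1}^n c_i u_i)_j ≤ 0 for every j ∈ {1,…,m}, with at least one of these inequalities strict; or (b) there exists w ∈ ℝ^m with w_j > 0 for every j such that w·u_i = 0 for each i ∈ {1,…,n}. -/
/-- **Stiemke's Theorem.**  Given `u_1, …, u_n ∈ ℝ^m`, exactly one of the following holds:
(a) there is `c ∈ ℝ^n` with `(Σ_i c_i u_i)_j ≤ 0` for every `j`, and at least one of these
inequalities strict; or (b) there is `w ∈ ℝ^m` with all coordinates strictly positive such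
that `w · u_i = 0` for every `i`. -/
theorem stiemke (n m : ℕ) (u : Fin n → Fin m → ℝ) :
    Xor'
      (∃ c : Fin n → ℝ,
        (∀ j, (∑ i, c i • u i) j ≤ 0) ∧ (∃ j, (∑ i, c i • u i) j < 0))
      (∃ w : Fin m → ℝ, (∀ j, 0 < w j) ∧ ∀ i, ∑ j, w j * u i j = 0) := by
  have hv : ∀ (c : Fin n → ℝ) (j : Fin m),
      (∑ i, c i • u i) j = ∑ i, c i * u i j := by
    intro c j
    simp [Finset.sum_apply]
  -- mutual exclusion
  have hexcl : (∃ c : Fin n → ℝ,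
        (∀ j, (∑ i, c i • u i) j ≤ 0) ∧ (∃ j, (∑ i, c i • u i) j < 0)) →
      ¬(∃ w : Fin m → ℝ, (∀ j, 0 < w j) ∧ ∀ i, ∑ j, w j * u i j = 0) := by
    rintro ⟨c, hle, j0, hj0⟩ ⟨w, hw, hwu⟩
    have key : ∑ j, w j * (∑ i, c i • u i) j = 0 := by
      have : ∑ j, w j * (∑ i, c i • u i) j
          = ∑ i, c i * ∑ j, w j * u i j := by
        simp_rw [hv, Finset.mul_sum]
        rw [Finset.sum_comm]
        congr 1; ext i; congr 1; ext j; ring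
      rw [this]
      simp [hwu]
    have hlt : ∑ j, w j * (∑ i, c i • u i) j < 0 := by
      have := Finset.sum_lt_sum (f := fun j => w j * (∑ i, c i • u i) j)
        (g := fun _ => (0 : ℝ)) (s := Finset.univ)
        (fun j _ => mul_nonpos_of_nonneg_of_nonpos (hw j).le (hle j))
        ⟨j0, Finset.mem_univ j0, mul_neg_of_pos_of_neg (hw j0) hj0⟩
      simpa using this
    linarith
  by_cases hP : ∃ c : Fin n → ℝ,
      (∀ j, (∑ i, c i • u i) j ≤ 0) ∧ (∃ j, (∑ i, c i • u i) j < 0)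
  · exact Or.inl ⟨hP, hexcl hP⟩
  · refine Or.inr ⟨?_, hP⟩
    show ∃ w : Fin m → ℝ, (∀ j, 0 < w j) ∧ ∀ i, ∑ j, w j * u i j = 0
    -- separation argument
    set V : Submodule ℝ (Fin m → ℝ) := Submodule.span ℝ (Set.range u) with hV
    have hdisj : Disjoint (V : Set (Fin m → ℝ)) (stdSimplex ℝ (Fin m)) := by
      rw [Set.disjoint_left]
      rintro x hxV ⟨hx0, hx1⟩
      obtain ⟨c, hc⟩ := (Finsupp.mem_span_range_iff_exists_finsupp).1 hxV
      apply hP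
      refine ⟨fun i => -(c i), fun j => ?_, ?_⟩
      · rw [hv]
        have : ∑ i, -(c i) * u i j = -x j := by
          rw [← hc]
          rw [Finsupp.sum_fintype _ _ (by simp)]
          simp [Finset.sum_apply, Finset.sum_neg_distrib]
        rw [this]
        simpa using hx0 j
      · by_contra h
        push_neg at h
        have : ∀ j, x j ≤ 0 := by
          intro j
          have := h j
          rw [hv] at this
          have hxj : ∑ i, -(c i) * u i j = -x j := by
            rw [← hc]; rw [Finsupp.sum_fintype _ _ (by simp)]
            simp [Finset.sum_apply]
          rw [hxj] at this
          linarith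
        have : ∑ j, x j ≤ 0 := Finset.sum_nonpos (fun j _ => this j)
        rw [hx1] at this
        linarith
    obtain ⟨f, a, b, hfV, hab, hfS⟩ :=
      geometric_hahn_banach_closed_compact (V.convex)
        V.closed_of_finiteDimensional (convex_stdSimplex ℝ _)
        (isCompact_stdSimplex ℝ _) hdisj
    -- f vanishes on V
    have hf0 : ∀ x ∈ V, f x = 0 := by
      intro x hx
      by_contra hfx
      have h1 : f (((a + |a| + 1) / f x) • x) < a :=
        hfV _ (V.smul_mem _ hx)
      rw [map_smul, smul_eq_mul] at h1
      have : (a + |a| + 1) / f x * f x = a + |a| + 1 := div_mul_cancel₀ _ hfx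
      rw [this] at h1
      have := abs_nonneg a
      have := le_abs_self a
      linarith
    have ha0 : 0 < a := by
      have := hfV 0 V.zero_mem
      simpa using this
    refine ⟨fun j => f (Pi.single j 1), fun j => ?_, fun i => ?_⟩
    · have hmem : Pi.single j (1 : ℝ) ∈ stdSimplex ℝ (Fin m) := by
        constructor
        · intro k
          rcases eq_or_ne j k with rfl | hk
          · simp
          · simp [Pi.single_apply, hk.symm]
        · simp
      have := hfS _ hmem
      linarith
    · have hui : u i = ∑ j, Pi.single j (u i j) := by
        simp [Finset.univ_sum_single]
      have h1 : f (u i) = 0 := hf0 _ (Submodule.subset_span ⟨i, rfl⟩)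
      calc ∑ j, f (Pi.single j 1) * u i j
          = ∑ j, f (Pi.single j (u i j)) := by
            refine Finset.sum_congr rfl fun j _ => ?_
            have h2 : (Pi.single j (u i j) : Fin m → ℝ)
                = (u i j) • (Pi.single j (1 : ℝ) : Fin m → ℝ) := by
              ext k; rcases eq_or_ne j k with rfl | hk
              · simp
              · simp [Pi.single_apply, hk.symm]
            rw [h2, map_smul, smul_eq_mul]; ring
        _ = f (∑ j, Pi.single j (u i j)) := (map_sum f _ _).symm
        _ = f (u i) := by rw [← hui]
        _ = 0 := h1
end

section
/- Let u_1, …, u_n ∈ ℝ^m, let U ⊆ {1,…,m}, and let V = {1,…,m} \ U. Then exactly one of the following holds: (a) there exists c ∈ ℝ^n such that (Σ_{i=1}^n c_i u_i)_j ≤ 0 for every j ∈ U and (Σ_{i=1}^n c_i u_i)_j ≥ 0 for every j ∈ V, with at least one of these inequalities strict; or (b) there exists w ∈ ℝ^m with w_j > 0 for every j ∈ U and w_j < 0 for every j ∈ V such that w·u_i = 0 for each i ∈ {1,…,n}. -/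
open Finset

/-- **Stiemke's Theorem** (one-sided form): exactly one of the two alternatives holds. -/
lemma stiemke_aux (n m : ℕ) (v : Fin n → Fin m → ℝ) :
    Xor'
      (∃ c : Fin n → ℝ, (∀ j, (∑ i, c i • v i) j ≤ 0) ∧ ∃ j, (∑ i, c i • v i) j < 0)
      (∃ w : Fin m → ℝ, (∀ j, 0 < w j) ∧ ∀ i, ∑ j, w j * v i j = 0) := by
  have notboth : ¬ ((∃ c : Fin n → ℝ, (∀ j, (∑ i, c i • v i) j ≤ 0) ∧
        ∃ j, (∑ i, c i • v i) j < 0) ∧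
      (∃ w : Fin m → ℝ, (∀ j, 0 < w j) ∧ ∀ i, ∑ j, w j * v i j = 0)) := by
    rintro ⟨⟨c, hc1, j₀, hj₀⟩, ⟨w, hw1, hw2⟩⟩
    have key : ∑ j, w j * (∑ i, c i • v i) j = 0 := by
      have : ∑ j, w j * (∑ i, c i • v i) j = ∑ i, c i * (∑ j, w j * v i j) := by
        simp only [Finset.sum_apply, Pi.smul_apply, smul_eq_mul, Finset.mul_sum]
        rw [Finset.sum_comm]
        exact Finset.sum_congr rfl (fun i _ => Finset.sum_congr rfl (fun j _ => by ring))
      rw [this]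
      simp [hw2]
    have neg : ∑ j, w j * (∑ i, c i • v i) j < 0 := by
      have : ∑ j, w j * (∑ i, c i • v i) j < ∑ j : Fin m, (0 : ℝ) := by
        refine Finset.sum_lt_sum (fun j _ => mul_nonpos_of_nonneg_of_nonpos
          (hw1 j).le (hc1 j)) ⟨j₀, Finset.mem_univ _, ?_⟩
        exact mul_neg_of_pos_of_neg (hw1 j₀) hj₀
      simpa using this
    exact absurd key neg.ne
  by_cases hA : (∃ c : Fin n → ℝ, (∀ j, (∑ i, c i • v i) j ≤ 0) ∧
      ∃ j, (∑ i, c i • v i) j < 0)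
  · exact Or.inl ⟨hA, fun hB => notboth ⟨hA, hB⟩⟩
  · refine Or.inr ⟨?_, hA⟩
    -- Separate the subspace spanned by the `v i` from the standard simplex.
    set L : Submodule ℝ (Fin m → ℝ) := Submodule.span ℝ (Set.range v) with hL
    have hdisj : Disjoint (stdSimplex ℝ (Fin m)) (L : Set (Fin m → ℝ)) := by
      rw [Set.disjoint_left]
      rintro x ⟨hx0, hx1⟩ hxL
      obtain ⟨c, hc⟩ := (Finsupp.mem_span_range_iff_exists_finsupp).1 hxL
      -- rewrite as a finite sum
      have hc' : ∑ i, c i • v i = x := by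
        rw [← hc]; exact (Finsupp.sum_fintype c (fun i x => x • v i) (fun i => zero_smul ℝ (v i))).symm
      apply hA
      refine ⟨-c, fun j => ?_, ?_⟩
      · have : (∑ i, (-c : Fin n → ℝ) i • v i) = -x := by
          simp only [Pi.neg_apply, neg_smul, Finset.sum_neg_distrib, hc']
        rw [this]; simpa using hx0 j
      · have hex : ∃ j, 0 < x j := by
          by_contra h
          push_neg at h
          have : ∑ j, x j ≤ 0 := Finset.sum_nonpos (fun j _ => h j)
          linarith [hx1]
        obtain ⟨j, hj⟩ := hex
        refine ⟨j, ?_⟩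
        have : (∑ i, (-c : Fin n → ℝ) i • v i) = -x := by
          simp only [Pi.neg_apply, neg_smul, Finset.sum_neg_distrib, hc']
        rw [this]; simpa using hj
    obtain ⟨f, a, b, hfs, hab, hfL⟩ :=
      geometric_hahn_banach_compact_closed (convex_stdSimplex ℝ (Fin m))
        (isCompact_stdSimplex ℝ (Fin m)) L.convex
        (Submodule.closed_of_finiteDimensional L) hdisj
    -- f vanishes on L
    have hf0 : ∀ x ∈ L, f x = 0 := by
      intro x hx
      by_contra hne
      have : f (((b - 1) / f x) • x) = b - 1 := by
        rw [map_smul, smul_eq_mul, div_mul_cancel₀ _ hne]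
      have hmem : ((b - 1) / f x) • x ∈ L := L.smul_mem _ hx
      have := hfL _ hmem
      linarith [this, ‹f (((b - 1) / f x) • x) = b - 1›]
    have hb0 : b < 0 := by
      have := hfL 0 L.zero_mem
      simpa using this
    have ha0 : a < 0 := lt_trans hab hb0
    -- basis vectors
    have hbasis : ∀ j : Fin m, f (fun k => if j = k then (1:ℝ) else 0) < a := by
      intro j
      exact hfs _ (ite_eq_mem_stdSimplex ℝ j)
    refine ⟨fun j => -(f (fun k => if j = k then (1:ℝ) else 0)), fun j => ?_, fun i => ?_⟩
    · exact neg_pos.mpr (lt_trans (hbasis j) ha0)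
    · have hrep : f (v i) = ∑ j, v i j • f (fun k => if j = k then (1:ℝ) else 0) :=
        LinearMap.pi_apply_eq_sum_univ (f : (Fin m → ℝ) →ₗ[ℝ] ℝ) (v i)
      have hfv : f (v i) = 0 := hf0 _ (Submodule.subset_span ⟨i, rfl⟩)
      have step : ∑ j, (fun j => -(f (fun k => if j = k then (1:ℝ) else 0))) j * v i j
          = -(∑ j, v i j • f (fun k => if j = k then (1:ℝ) else 0)) := by
        rw [← Finset.sum_neg_distrib]
        exact Finset.sum_congr rfl (fun j _ => by simp [smul_eq_mul]; ring)
      rw [step, ← hrep, hfv, neg_zero]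

/-- **Corollary of Stiemke's Theorem.**  Given `u_1, …, u_n ∈ ℝ^m` and `U ⊆ {1,…,m}` with
complement `V`, exactly one of the following holds: (a) there is `c ∈ ℝ^n` with
`(Σ_i c_i u_i)_j ≤ 0` for `j ∈ U` and `(Σ_i c_i u_i)_j ≥ 0` for `j ∈ V`, with at least one
of these inequalities strict; or (b) there is `w ∈ ℝ^m` with `w_j > 0` for `j ∈ U` and
`w_j < 0` for `j ∈ V` such that `w · u_i = 0` for every `i`. -/
theorem stiemke_corollary (n m : ℕ) (u : Fin n → Fin m → ℝ) (U : Set (Fin m)) :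
    Xor'
      (∃ c : Fin n → ℝ,
        (∀ j ∈ U, (∑ i, c i • u i) j ≤ 0) ∧
        (∀ j ∉ U, 0 ≤ (∑ i, c i • u i) j) ∧
        ((∃ j ∈ U, (∑ i, c i • u i) j < 0) ∨ (∃ j ∉ U, 0 < (∑ i, c i • u i) j)))
      (∃ w : Fin m → ℝ,
        (∀ j ∈ U, 0 < w j) ∧ (∀ j ∉ U, w j < 0) ∧ ∀ i, ∑ j, w j * u i j = 0) := by
  classical
  set v : Fin n → Fin m → ℝ := fun i j => if j ∈ U then u i j else -(u i j) with hv
  have key : ∀ (c : Fin n → ℝ) (j : Fin m),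
      (∑ i, c i • v i) j = if j ∈ U then (∑ i, c i • u i) j else -((∑ i, c i • u i) j) := by
    intro c j
    simp only [Finset.sum_apply, Pi.smul_apply, smul_eq_mul, hv]
    by_cases h : j ∈ U <;> simp [h, mul_neg, Finset.sum_neg_distrib]
  have hAiff :
      (∃ c : Fin n → ℝ, (∀ j, (∑ i, c i • v i) j ≤ 0) ∧ ∃ j, (∑ i, c i • v i) j < 0) ↔
      (∃ c : Fin n → ℝ,
        (∀ j ∈ U, (∑ i, c i • u i) j ≤ 0) ∧
        (∀ j ∉ U, 0 ≤ (∑ i, c i • u i) j) ∧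
        ((∃ j ∈ U, (∑ i, c i • u i) j < 0) ∨ (∃ j ∉ U, 0 < (∑ i, c i • u i) j))) := by
    constructor
    · rintro ⟨c, h1, j₀, hj₀⟩
      refine ⟨c, fun j hj => ?_, fun j hj => ?_, ?_⟩
      · have := h1 j; rw [key, if_pos hj] at this; exact this
      · have := h1 j; rw [key, if_neg hj] at this; linarith
      · rw [key] at hj₀
        by_cases h : j₀ ∈ U
        · rw [if_pos h] at hj₀; exact Or.inl ⟨j₀, h, hj₀⟩
        · rw [if_neg h] at hj₀; exact Or.inr ⟨j₀, h, by linarith⟩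
    · rintro ⟨c, h1, h2, h3⟩
      refine ⟨c, fun j => ?_, ?_⟩
      · rw [key]
        by_cases h : j ∈ U
        · rw [if_pos h]; exact h1 j h
        · rw [if_neg h]; linarith [h2 j h]
      · rcases h3 with ⟨j, hj, hlt⟩ | ⟨j, hj, hlt⟩
        · exact ⟨j, by rw [key, if_pos hj]; exact hlt⟩
        · exact ⟨j, by rw [key, if_neg hj]; linarith⟩
  have hBiff :
      (∃ w : Fin m → ℝ, (∀ j, 0 < w j) ∧ ∀ i, ∑ j, w j * v i j = 0) ↔
      (∃ w : Fin m → ℝ,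
        (∀ j ∈ U, 0 < w j) ∧ (∀ j ∉ U, w j < 0) ∧ ∀ i, ∑ j, w j * u i j = 0) := by
    constructor
    · rintro ⟨w, hw1, hw2⟩
      refine ⟨fun j => if j ∈ U then w j else -(w j), fun j hj => ?_, fun j hj => ?_, fun i => ?_⟩
      · simpa [if_pos hj] using hw1 j
      · have := hw1 j; simp only [if_neg hj]; linarith
      · have := hw2 i
        rw [← this]
        refine Finset.sum_congr rfl (fun j _ => ?_)
        by_cases h : j ∈ U <;> simp [hv, h]
    · rintro ⟨w, hw1, hw2, hw3⟩
      refine ⟨fun j => if j ∈ U then w j else -(w j), fun j => ?_, fun i => ?_⟩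
      · by_cases h : j ∈ U
        · simpa [if_pos h] using hw1 j h
        · have := hw2 j h; simp only [if_neg h]; linarith
      · have := hw3 i
        rw [← this]
        refine Finset.sum_congr rfl (fun j _ => ?_)
        by_cases h : j ∈ U <;> simp [hv, h]
  rcases stiemke_aux n m v with ⟨ha, hb⟩ | ⟨hb, ha⟩
  · exact Or.inl ⟨hAiff.mp ha, fun h' => hb (hBiff.mpr h')⟩
  · exact Or.inr ⟨hBiff.mp hb, fun h' => ha (hAiff.mpr h')⟩
end

section
/- Let 𝒞 be a finite set of vectors in ℝ^N and let (x_n) be a partially monotonic sequence of points in ℝ^N_{>0} such that lim_{n→∞} x_{n,i} ∈ {0, ∞} for at least one index i ∈ {1,…,N}. Set U = {i : lim_{n→∞} x_{n,i} = 0} and V = {j : lim_{n→∞} x_{n,j} = ∞}. Suppose 𝒞 is partitioned along (x_n) with tiers T_1, …, T_P and constant C > 1. Then there exists a conservation relation w ∈ ℝ^N that respects the triple (U, V, {T_i}). -/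
open Filter

/-- A positive sequence `(x_n)` in `ℝ^N_{>0}` is partially monotonic: the coordinates with
`liminf_n x_{n,i} = 0` (equivalently, frequently below any `ε > 0`) are nonincreasing, and
those with `limsup_n x_{n,j} = ∞` (equivalently, frequently above any `M`) are
nondecreasing. -/
def PartiallyMonotonic {N : ℕ} (x : ℕ → Fin N → ℝ) : Prop :=
  (∀ i, (∀ ε > (0 : ℝ), ∃ᶠ n in atTop, x n i < ε) → ∀ n, x (n + 1) i ≤ x n i) ∧
  (∀ j, (∀ M : ℝ, ∃ᶠ n in atTop, M < x n j) → ∀ n, x n j ≤ x (n + 1) j)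

/-- `w` is a conservation relation that respects the triple `(U, V, {T_i})`:
`U` is the positive support of `w`, `V` is its negative support, and `w · (y − z) = 0`
whenever `y` and `z` lie in a common tier. -/
def ConservationRelation {N : ℕ} (w : Fin N → ℝ) (U V : Set (Fin N))
    {P : ℕ} (T : Fin P → Finset (Fin N → ℝ)) : Prop :=
  {i | 0 < w i} = U ∧ {i | w i < 0} = V ∧
  ∀ i, ∀ y ∈ T i, ∀ z ∈ T i, ∑ j, w j * (y j - z j) = 0


private lemma abs_bdd_of_eventually {a : ℕ → ℝ} (h : ∃ N B, ∀ n ≥ N, |a n| ≤ B) :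
    ∃ B, ∀ n, |a n| ≤ B := by
  obtain ⟨N, B, h⟩ := h
  refine ⟨max B ((Finset.range (N + 1)).sup' ⟨0, by simp⟩ fun m => |a m|), fun n => ?_⟩
  rcases le_or_gt n N with hn | hn
  · have hmem : n ∈ Finset.range (N + 1) := Finset.mem_range.mpr (Nat.lt_succ_of_le hn)
    exact le_max_of_le_right (Finset.le_sup' (fun m => |a m|) hmem)
  · exact le_max_of_le_left (h n hn.le)

private lemma vpow_pos {N : ℕ} {u : Fin N → ℝ} (hu : ∀ i, 0 < u i) (v : Fin N → ℝ) :
    0 < vpow u v :=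
  Finset.prod_pos fun i _ => Real.rpow_pos_of_pos (hu i) _

private lemma log_vpow {N : ℕ} {u : Fin N → ℝ} (hu : ∀ i, 0 < u i) (v : Fin N → ℝ) :
    Real.log (vpow u v) = ∑ i, v i * Real.log (u i) := by
  unfold vpow
  rw [Real.log_prod fun i _ => (Real.rpow_pos_of_pos (hu i) _).ne']
  exact Finset.sum_congr rfl fun i _ => Real.log_rpow (hu i) _

private lemma log_ratio_bound {a b c : ℝ} (hc : 1 < c) (ha : 0 < a) (hb : 0 < b)
    (h1 : (1 / c) * a ≤ b) (h2 : b ≤ c * a) : |Real.log b - Real.log a| ≤ Real.log c := by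
  have hc0 : 0 < c := lt_trans one_pos hc
  rw [abs_le]
  constructor
  · have h3 : a ≤ c * b := by
      have h4 := mul_le_mul_of_nonneg_left h1 hc0.le
      calc a = c * ((1 / c) * a) := by field_simp
        _ ≤ c * b := h4
    have h5 := Real.log_le_log ha h3
    rw [Real.log_mul hc0.ne' hb.ne'] at h5
    linarith
  · have h5 := Real.log_le_log hb h2
    rw [Real.log_mul hc0.ne' ha.ne'] at h5
    linarith

/-- **Theorem (existence of a conservation relation).**  Let `𝒞` be a finite set of vectors
in `ℝ^N` and let `(x_n)` be a partially monotonic sequence in `ℝ^N_{>0}` such that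
`lim_n x_{n,i} ∈ {0, ∞}` for at least one `i`.  Let `U` (resp. `V`) be the set of indices
whose coordinates tend to `0` (resp. `∞`).  If `𝒞` is partitioned along `(x_n)` with tiers
`T_1, …, T_P` and constant `C > 1`, then there exists a conservation relation `w ∈ ℝ^N`
respecting the triple `(U, V, {T_i})`. -/
theorem exists_conservation_relation
    {N : ℕ} (C : Finset (Fin N → ℝ)) (x : ℕ → Fin N → ℝ)
    (hxpos : ∀ n i, 0 < x n i)
    (hmono : PartiallyMonotonic x)
    (hlim : ∃ i, Tendsto (fun n => x n i) atTop (nhds 0) ∨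
                 Tendsto (fun n => x n i) atTop atTop)
    {P : ℕ} (T : Fin P → Finset (Fin N → ℝ)) (c : ℝ)
    (hpart : PartitionedAlong C x T c) :
    ∃ w : Fin N → ℝ,
      ConservationRelation w
        {i | Tendsto (fun n => x n i) atTop (nhds 0)}
        {j | Tendsto (fun n => x n j) atTop atTop}
        T := by
  classical
  clear hlim
  unfold PartitionedAlong PartitionedAlongWith at hpart
  obtain ⟨hTier, hc, hcomp, -⟩ := hpart
  set U : Set (Fin N) := {i | Tendsto (fun n => x n i) atTop (nhds 0)} with hUdef
  set V : Set (Fin N) := {j | Tendsto (fun n => x n j) atTop atTop} with hVdef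
  -- U and V are disjoint
  have hUV : ∀ i, i ∈ U → i ∈ V → False := by
    intro i h1 h2
    have e1 : ∀ᶠ n in atTop, x n i < 1 := h1.eventually_lt_const one_pos
    have e2 : ∀ᶠ n in atTop, (1 : ℝ) < x n i := h2.eventually_gt_atTop 1
    obtain ⟨n, hn1, hn2⟩ := (e1.and e2).exists
    linarith
  -- the log sequence
  set ℓ : ℕ → EuclideanSpace ℝ (Fin N) := fun n => WithLp.toLp 2 (fun i => -Real.log (x n i)) with hldef
  set v : ℕ → EuclideanSpace ℝ (Fin N) := fun n => ℓ n - ℓ 0 with hvdef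
  have hvapp : ∀ n k, v n k = -Real.log (x n k) + Real.log (x 0 k) := by
    intro n k
    simp only [hvdef, hldef, PiLp.sub_apply, PiLp.toLp_apply]
    ring
  -- coordinates not in U are eventually bounded below
  have hnotU : ∀ k, k ∉ U → ∃ ε > (0 : ℝ), ∀ᶠ n in atTop, ε ≤ x n k := by
    intro k hk
    by_contra hcon
    push_neg at hcon
    have hfreq : ∀ ε > (0 : ℝ), ∃ᶠ n in atTop, x n k < ε := by
      intro ε hε
      have hf := Filter.not_eventually.mp (hcon ε hε)
      exact hf.mono fun n hn => not_not.mp hn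
    have hanti : ∀ n, x (n + 1) k ≤ x n k := hmono.1 k hfreq
    have hA : Antitone fun n => x n k := antitone_nat_of_succ_le hanti
    have : Tendsto (fun n => x n k) atTop (nhds 0) := by
      rw [Metric.tendsto_atTop]
      intro ε hε
      obtain ⟨n, hn⟩ := (hfreq ε hε).exists
      refine ⟨n, fun m hm => ?_⟩
      have h1 : x m k ≤ x n k := hA hm
      have h2 : 0 < x m k := hxpos m k
      rw [Real.dist_eq, sub_zero, abs_of_pos h2]
      linarith
    exact hk this
  -- coordinates not in V are eventually bounded above
  have hnotV : ∀ k, k ∉ V → ∃ M : ℝ, ∀ᶠ n in atTop, x n k ≤ M := by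
    intro k hk
    by_contra hcon
    push_neg at hcon
    have hfreq : ∀ M : ℝ, ∃ᶠ n in atTop, M < x n k := by
      intro M
      have hf := Filter.not_eventually.mp (hcon M)
      exact hf.mono fun n hn => not_not.mp hn
    have hmon : ∀ n, x n k ≤ x (n + 1) k := hmono.2 k hfreq
    have hM : Monotone fun n => x n k := monotone_nat_of_le_succ hmon
    have : Tendsto (fun n => x n k) atTop atTop := by
      rw [tendsto_atTop]
      intro b
      obtain ⟨n, hn⟩ := (hfreq b).exists
      rw [eventually_atTop]
      exact ⟨n, fun m hm => le_of_lt (lt_of_lt_of_le hn (hM hm))⟩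
    exact hk this
  -- the spanning set
  set W : Finset (Fin N) := Finset.univ.filter (fun k => k ∉ U ∧ k ∉ V) with hWdef
  set S1 : Finset (EuclideanSpace ℝ (Fin N)) :=
    Finset.univ.biUnion (fun i : Fin P =>
      ((T i) ×ˢ (T i)).image fun p => (WithLp.toLp 2 (p.1 - p.2) : EuclideanSpace ℝ (Fin N))) with hS1def
  set S : Finset (EuclideanSpace ℝ (Fin N)) :=
    S1 ∪ W.image (fun k => EuclideanSpace.single k (1 : ℝ)) with hSdef
  set K : Submodule ℝ (EuclideanSpace ℝ (Fin N)) :=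
    Submodule.span ℝ (S : Set (EuclideanSpace ℝ (Fin N))) with hKdef
  -- inner ℝ products with elements of S are uniformly bounded along v
  have hSbdd : ∀ d ∈ S, ∃ B, ∀ n, |(inner ℝ d (v n) : ℝ)| ≤ B := by
    intro d hd
    rw [hSdef, Finset.mem_union] at hd
    rcases hd with hd | hd
    · -- tier difference
      rw [hS1def, Finset.mem_biUnion] at hd
      obtain ⟨i, -, hd⟩ := hd
      rw [Finset.mem_image] at hd
      obtain ⟨p, hyz, hdeq⟩ := hd
      rw [Finset.mem_product] at hyz
      have hdeq' : WithLp.toLp 2 (p.1 - p.2) = d := hdeq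
      have hdk : ∀ j, d j = p.1 j - p.2 j := fun j => by rw [← hdeq']; exact rfl
      have key : ∀ m, (inner ℝ d (ℓ m) : ℝ)
          = Real.log (vpow (x m) p.2) - Real.log (vpow (x m) p.1) := by
        intro m
        have h1 : (inner ℝ d (ℓ m) : ℝ) = ∑ j, (p.1 j - p.2 j) * (-Real.log (x m j)) := by
          rw [PiLp.inner_apply]
          refine Finset.sum_congr rfl fun j _ => ?_
          rw [RCLike.inner_apply, hdk j]
          simp [hldef, starRingEnd_apply]
          ring
        rw [h1, log_vpow (fun j => hxpos m j), log_vpow (fun j => hxpos m j),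
          ← Finset.sum_sub_distrib]
        exact Finset.sum_congr rfl fun j _ => by ring
      have hbd : ∀ m, |(inner ℝ d (ℓ m) : ℝ)| ≤ Real.log c := by
        intro m
        rw [key m]
        have h1 := (hcomp i p.1 hyz.1 p.2 hyz.2 m).1
        have h2 := (hcomp i p.1 hyz.1 p.2 hyz.2 m).2
        exact log_ratio_bound hc (vpow_pos (fun j => hxpos m j) p.1)
          (vpow_pos (fun j => hxpos m j) p.2) h1 h2
      refine ⟨2 * Real.log c, fun n => ?_⟩
      have h3 : (inner ℝ d (v n) : ℝ) = (inner ℝ d (ℓ n) : ℝ) - (inner ℝ d (ℓ 0) : ℝ) := by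
        have h0 : v n = ℓ n - ℓ 0 := rfl
        rw [h0, inner_sub_right]
      have h4 := hbd n
      have h5 := hbd 0
      rw [abs_le] at h4 h5
      rw [h3, abs_le]
      exact ⟨by linarith [h4.1, h5.2], by linarith [h4.2, h5.1]⟩
    · -- coordinate vector
      rw [Finset.mem_image] at hd
      obtain ⟨k, hk, rfl⟩ := hd
      rw [hWdef, Finset.mem_filter] at hk
      obtain ⟨-, hkU, hkV⟩ := hk
      have hinner : ∀ n, (inner ℝ (EuclideanSpace.single k (1 : ℝ)) (v n) : ℝ) = v n k := by
        intro n
        rw [EuclideanSpace.inner_single_left]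
        simp
      obtain ⟨ε, hε, hev1⟩ := hnotU k hkU
      obtain ⟨M, hev2⟩ := hnotV k hkV
      have hbd : ∃ B, ∀ n, |v n k| ≤ B := by
        apply abs_bdd_of_eventually
        obtain ⟨N1, hN1⟩ := eventually_atTop.mp (hev1.and hev2)
        refine ⟨N1, max |Real.log ε| |Real.log M| + |Real.log (x 0 k)|, fun n hn => ?_⟩
        obtain ⟨h1, h2⟩ := hN1 n hn
        have hl1 : Real.log ε ≤ Real.log (x n k) := Real.log_le_log hε h1
        have hl2 : Real.log (x n k) ≤ Real.log M := Real.log_le_log (hxpos n k) h2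
        have h3 : |Real.log (x n k)| ≤ max |Real.log ε| |Real.log M| := by
          rw [abs_le]
          constructor
          · have := neg_abs_le (Real.log ε)
            have := le_max_left |Real.log ε| |Real.log M|
            linarith
          · have := le_abs_self (Real.log M)
            have := le_max_right |Real.log ε| |Real.log M|
            linarith
        rw [hvapp n k]
        calc |-Real.log (x n k) + Real.log (x 0 k)|
            ≤ |-Real.log (x n k)| + |Real.log (x 0 k)| := abs_add_le _ _
          _ ≤ max |Real.log ε| |Real.log M| + |Real.log (x 0 k)| := by
              rw [abs_neg]; linarith
      obtain ⟨B, hB⟩ := hbd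
      exact ⟨B, fun n => by rw [hinner n]; exact hB n⟩
  choose Bf hBf using hSbdd
  obtain ⟨M0, hM0⟩ := Finite.exists_le fun a : {d // d ∈ S} => Bf a.1 a.2
  set M : ℝ := max M0 0 with hMdef
  have hMnn : 0 ≤ M := le_max_right _ _
  have hM : ∀ d (hd : d ∈ S), ∀ n, |(inner ℝ d (v n) : ℝ)| ≤ M := fun d hd n =>
    (hBf d hd n).trans ((hM0 ⟨d, hd⟩).trans (le_max_left _ _))
  -- the linear map given by inner ℝ products with elements of S
  haveI : CompleteSpace K := FiniteDimensional.complete ℝ K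
  set f : K →ₗ[ℝ] ({d // d ∈ S} → ℝ) :=
    LinearMap.pi (fun d : {d // d ∈ S} =>
      ((innerSL ℝ (d.1 : EuclideanSpace ℝ (Fin N))).toLinearMap.comp K.subtype)) with hfdef
  have hfapp : ∀ (p : K) (d : {d // d ∈ S}), f p d = (inner ℝ d.1 (p : EuclideanSpace ℝ (Fin N)) : ℝ) := by
    intro p d
    rfl
  have hker : LinearMap.ker f = ⊥ := by
    rw [LinearMap.ker_eq_bot']
    intro p hp
    have h0 : ∀ d ∈ S, (inner ℝ d (p : EuclideanSpace ℝ (Fin N)) : ℝ) = 0 := by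
      intro d hd
      have := congrFun hp ⟨d, hd⟩
      rw [hfapp] at this
      exact this
    have h1 : ∀ u, u ∈ K → (inner ℝ u (p : EuclideanSpace ℝ (Fin N)) : ℝ) = 0 := by
      intro u hu
      induction hu using Submodule.span_induction with
      | mem u hu => exact h0 u hu
      | zero => exact inner_zero_left _
      | add u w hu hw h1 h2 => rw [inner_add_left, h1, h2, add_zero]
      | smul a u hu h1 => rw [real_inner_smul_left, h1, mul_zero]
    have h2 := h1 (p : EuclideanSpace ℝ (Fin N)) p.2
    rw [inner_self_eq_zero] at h2
    exact Subtype.ext h2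
  obtain ⟨κ, hκpos, hκ⟩ := f.exists_antilipschitzWith hker
  -- the orthogonal complement part of v
  set q : ℕ → EuclideanSpace ℝ (Fin N) :=
    fun n => v n - ((K.orthogonalProjectionOnto (v n)) : EuclideanSpace ℝ (Fin N)) with hqdef
  have hqK : ∀ n, q n ∈ Kᗮ := fun n => K.sub_starProjection_mem_orthogonal (v n)
  have hinner_q : ∀ n, ∀ u ∈ K, (inner ℝ u (q n) : ℝ) = 0 := fun n u hu =>
    (Submodule.mem_orthogonal K (q n)).mp (hqK n) u hu
  have hproj_bdd : ∀ n, ‖((K.orthogonalProjectionOnto (v n)) : EuclideanSpace ℝ (Fin N))‖ ≤ κ * M := by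
    intro n
    set p : K := K.orthogonalProjectionOnto (v n) with hpdef
    have h1 : ∀ d (hd : d ∈ S),
        (inner ℝ d ((p : EuclideanSpace ℝ (Fin N))) : ℝ) = (inner ℝ d (v n) : ℝ) := by
      intro d hd
      have hd' : d ∈ K := Submodule.subset_span hd
      have h2 := hinner_q n d hd'
      have h3 : q n = v n - (p : EuclideanSpace ℝ (Fin N)) := rfl
      rw [h3, inner_sub_right] at h2
      linarith
    have h2 : ‖f p‖ ≤ M := by
      rw [pi_norm_le_iff_of_nonneg hMnn]
      intro d
      rw [hfapp, Real.norm_eq_abs, h1 d.1 d.2]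
      exact hM d.1 d.2 n
    have h3 : ‖p‖ ≤ κ * ‖f p‖ := by
      have h4 := hκ.le_mul_dist p 0
      rw [map_zero, dist_zero_right, dist_zero_right] at h4
      exact h4
    calc ‖((p : EuclideanSpace ℝ (Fin N)))‖ = ‖p‖ := (Submodule.coe_norm p).symm
      _ ≤ κ * ‖f p‖ := h3
      _ ≤ κ * M := mul_le_mul_of_nonneg_left h2 κ.coe_nonneg
  have coord_le : ∀ (u : EuclideanSpace ℝ (Fin N)) i, |u i| ≤ ‖u‖ := by
    intro u i
    have h := abs_real_inner_le_norm (EuclideanSpace.single i (1 : ℝ)) u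
    rw [EuclideanSpace.inner_single_left, EuclideanSpace.norm_single] at h
    simpa using h
  have hq_coord : ∀ n i, |q n i - v n i| ≤ κ * M := by
    intro n i
    have h1 : q n i - v n i = -(((K.orthogonalProjectionOnto (v n)) : EuclideanSpace ℝ (Fin N)) i) := by
      have h0 : q n = v n - ((K.orthogonalProjectionOnto (v n)) : EuclideanSpace ℝ (Fin N)) := rfl
      rw [h0, PiLp.sub_apply]
      ring
    rw [h1, abs_neg]
    exact (coord_le _ i).trans (hproj_bdd n)
  -- divergence of coordinates in U and V
  have hvU : ∀ i, i ∈ U → Tendsto (fun n => v n i) atTop atTop := by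
    intro i hi
    have hx0 : Tendsto (fun n => x n i) atTop (nhdsWithin 0 (Set.Ioi 0)) :=
      tendsto_nhdsWithin_of_tendsto_nhds_of_eventually_within _ hi
        (Eventually.of_forall fun n => hxpos n i)
    have hlog : Tendsto (fun n => Real.log (x n i)) atTop atBot :=
      Real.tendsto_log_nhdsGT_zero.comp hx0
    have h1 : Tendsto (fun n => -Real.log (x n i)) atTop atTop :=
      tendsto_neg_atBot_atTop.comp hlog
    have h2 := tendsto_atTop_add_const_right atTop (Real.log (x 0 i)) h1
    refine h2.congr fun n => ?_
    rw [hvapp n i]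
  have hvV : ∀ j, j ∈ V → Tendsto (fun n => v n j) atTop atBot := by
    intro j hj
    have hlog : Tendsto (fun n => Real.log (x n j)) atTop atTop :=
      Real.tendsto_log_atTop.comp hj
    have h1 : Tendsto (fun n => -Real.log (x n j)) atTop atBot :=
      tendsto_neg_atTop_atBot.comp hlog
    have h2 := tendsto_atBot_add_const_right atTop (Real.log (x 0 j)) h1
    refine h2.congr fun n => ?_
    rw [hvapp n j]
  -- eventually the signs are correct
  have hall : ∀ᶠ n in atTop, ∀ i : Fin N, (i ∈ U → 0 < q n i) ∧ (i ∈ V → q n i < 0) := by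
    rw [eventually_all]
    intro i
    apply Eventually.and
    · by_cases hi : i ∈ U
      · have h1 := (hvU i hi).eventually_gt_atTop (κ * M)
        refine h1.mono fun n hn _ => ?_
        have h2 := hq_coord n i
        rw [abs_le] at h2
        linarith [h2.1]
      · exact Eventually.of_forall fun n h => absurd h hi
    · by_cases hj : i ∈ V
      · have h1 := (hvV i hj).eventually_lt_atBot (-(κ * M))
        refine h1.mono fun n hn _ => ?_
        have h2 := hq_coord n i
        rw [abs_le] at h2
        linarith [h2.2]
      · exact Eventually.of_forall fun n h => absurd h hj
  obtain ⟨n₀, hn₀⟩ := hall.exists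
  -- coordinates outside U ∪ V vanish
  have hW0 : ∀ k, k ∉ U → k ∉ V → q n₀ k = 0 := by
    intro k hkU hkV
    have hkmem : EuclideanSpace.single k (1 : ℝ) ∈ K := by
      apply Submodule.subset_span
      rw [hSdef]
      simp only [Finset.coe_union, Set.mem_union, Finset.mem_coe]
      right
      rw [Finset.mem_image]
      exact ⟨k, by rw [hWdef, Finset.mem_filter]; exact ⟨Finset.mem_univ _, hkU, hkV⟩, rfl⟩
    have h1 := hinner_q n₀ _ hkmem
    rw [EuclideanSpace.inner_single_left] at h1
    simpa using h1
  refine ⟨q n₀, ?_, ?_, ?_⟩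
  · ext i
    simp only [Set.mem_setOf_eq]
    constructor
    · intro h
      by_contra hiU
      by_cases hiV : i ∈ V
      · have := (hn₀ i).2 hiV
        linarith
      · have := hW0 i hiU hiV
        linarith
    · exact fun h => (hn₀ i).1 h
  · ext j
    simp only [Set.mem_setOf_eq]
    constructor
    · intro h
      by_contra hjV
      by_cases hjU : j ∈ U
      · have := (hn₀ j).1 hjU
        linarith
      · have := hW0 j hjU hjV
        linarith
    · exact fun h => (hn₀ j).2 h
  · intro i y hy z hz
    have hyzmem : (WithLp.toLp 2 (y - z) : EuclideanSpace ℝ (Fin N)) ∈ K := by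
      apply Submodule.subset_span
      rw [hSdef]
      simp only [Finset.coe_union, Set.mem_union, Finset.mem_coe]
      left
      rw [hS1def, Finset.mem_biUnion]
      exact ⟨i, Finset.mem_univ _, Finset.mem_image.mpr
        ⟨(y, z), Finset.mem_product.mpr ⟨hy, hz⟩, rfl⟩⟩
    have h1 := hinner_q n₀ _ hyzmem
    rw [PiLp.inner_apply] at h1
    rw [← h1]
    refine Finset.sum_congr rfl fun j _ => ?_
    have hsub : (WithLp.toLp 2 (y - z) : EuclideanSpace ℝ (Fin N)) j = y j - z j := rfl
    rw [RCLike.inner_apply, hsub]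
    simp only [starRingEnd_apply, star_trivial]
end

section
/- Let (𝒞, ℛ) be a chemical reaction network on N species whose reaction diagram consists of a single linkage class (i.e., is connected). Then there does not exist a sequence of points x_n ∈ ℝ^N_{>0}, all lying in the same stoichiometric compatibility class (i.e., x_n − x_m ∈ span{y' − y : y → y' ∈ ℛ} for all n, m), for which lim_{n→∞} x_{n,i} ∈ {0, ∞} for at least one i and such that (i) 𝒞 is partitioned along (x_n) with tiers T_1, …, T_P and constant C, and (ii) T_1 consists of a union of linkage classes. -/
open Filter

/-- A chemical reaction network on `N` species: a finite set of complexes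
(vectors in `ℤ^N_{≥0}`, modelled as real vectors with nonnegative-integer entries)
and a finite set of reactions (ordered pairs of distinct complexes), such that
every complex takes part in at least one reaction. -/
structure ReactionNetwork (N : ℕ) where
  complexes : Finset (Fin N → ℝ)
  reactions : Finset ((Fin N → ℝ) × (Fin N → ℝ))
  complexes_nonneg_int : ∀ y ∈ complexes, ∀ i, ∃ m : ℕ, y i = (m : ℝ)
  source_mem : ∀ r ∈ reactions, r.1 ∈ complexes
  target_mem : ∀ r ∈ reactions, r.2 ∈ complexes
  ne_of_mem : ∀ r ∈ reactions, r.1 ≠ r.2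
  complex_in_reaction : ∀ y ∈ complexes, ∃ r ∈ reactions, r.1 = y ∨ r.2 = y

/-- Two complexes are connected in the underlying undirected reaction diagram. -/
def ReactionNetwork.UndirConn {N : ℕ} (rn : ReactionNetwork N) :
    (Fin N → ℝ) → (Fin N → ℝ) → Prop :=
  Relation.ReflTransGen (fun a b => (a, b) ∈ rn.reactions ∨ (b, a) ∈ rn.reactions)

/-- There is a directed path (along reactions) from one complex to another. -/
def ReactionNetwork.DirReach {N : ℕ} (rn : ReactionNetwork N) :
    (Fin N → ℝ) → (Fin N → ℝ) → Prop :=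
  Relation.ReflTransGen (fun a b => (a, b) ∈ rn.reactions)

/-- The network is weakly reversible: each linkage class (connected component of the
underlying undirected reaction diagram) is strongly connected. -/
def ReactionNetwork.WeaklyReversible {N : ℕ} (rn : ReactionNetwork N) : Prop :=
  ∀ y ∈ rn.complexes, ∀ z ∈ rn.complexes, rn.UndirConn y z → rn.DirReach y z

/-- The reaction diagram consists of a single linkage class, i.e. it is connected. -/
def ReactionNetwork.SingleLinkageClass {N : ℕ} (rn : ReactionNetwork N) : Prop :=
  ∀ y ∈ rn.complexes, ∀ z ∈ rn.complexes, rn.UndirConn y z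

/-- `T ⊆ 𝒞` consists of a (nonempty) union of linkage classes. -/
def ReactionNetwork.IsUnionOfLinkageClasses {N : ℕ} (rn : ReactionNetwork N)
    (T : Finset (Fin N → ℝ)) : Prop :=
  T.Nonempty ∧ (∀ y ∈ T, y ∈ rn.complexes) ∧
  ∀ y ∈ T, ∀ z ∈ rn.complexes, rn.UndirConn y z → z ∈ T

/-- The stoichiometric subspace `S = span{y' − y : y → y' ∈ ℛ}`. -/
def ReactionNetwork.stoichSubspace {N : ℕ} (rn : ReactionNetwork N) :
    Submodule ℝ (Fin N → ℝ) :=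
  Submodule.span ℝ {v : Fin N → ℝ | ∃ r ∈ rn.reactions, v = r.2 - r.1}

/-- Bounded mass-action kinetics: each rate function `κ_k` satisfies
`η < κ_k(t) < 1/η` for all `t ≥ 0`. -/
def ReactionNetwork.BoundedKinetics {N : ℕ} (rn : ReactionNetwork N)
    (κ : ((Fin N → ℝ) × (Fin N → ℝ)) → ℝ → ℝ) (η : ℝ) : Prop :=
  0 < η ∧ ∀ r ∈ rn.reactions, ∀ t : ℝ, 0 ≤ t → η < κ r t ∧ κ r t < 1 / η


/-! ### Auxiliary machinery -/

/-- The linear functional `v ↦ ∑ i, v i * log (w i)`. -/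
noncomputable def logSum {N : ℕ} (w : Fin N → ℝ) : (Fin N → ℝ) →ₗ[ℝ] ℝ where
  toFun v := ∑ i, v i * Real.log (w i)
  map_add' a b := by simp [add_mul, Finset.sum_add_distrib]
  map_smul' c a := by simp [Finset.mul_sum, mul_assoc]

lemma logSum_apply {N : ℕ} (w v : Fin N → ℝ) :
    logSum w v = ∑ i, v i * Real.log (w i) := rfl

lemma vpow_eq_exp {N : ℕ} (u v : Fin N → ℝ) (hu : ∀ i, 0 < u i) :
    vpow u v = Real.exp (logSum u v) := by
  simp only [vpow, logSum_apply, Real.exp_sum]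
  exact Finset.prod_congr rfl fun i _ => by
    rw [Real.rpow_def_of_pos (hu i), mul_comm]

lemma mul_log_ge_neg_one {t : ℝ} (ht : 0 < t) : -1 ≤ t * Real.log t := by
  rcases le_or_gt 1 t with h | h
  · have := Real.log_nonneg h
    nlinarith
  · have h1 : Real.log (1 / t) ≤ 1 / t - 1 := Real.log_le_sub_one_of_pos (by positivity)
    rw [one_div, Real.log_inv] at h1
    have h2 : -Real.log t ≤ t⁻¹ := by linarith
    have h3 : t * t⁻¹ = 1 := mul_inv_cancel₀ (ne_of_gt ht)
    nlinarith

lemma sub_le_log_of_exp_le {a b c : ℝ} (hc : 0 < c)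
    (h : Real.exp b ≤ c * Real.exp a) : b - a ≤ Real.log c := by
  have h' : Real.exp b ≤ Real.exp (Real.log c + a) := by
    rw [Real.exp_add, Real.exp_log hc]; exact h
  linarith [Real.exp_le_exp.mp h']

lemma span_bound {N : ℕ} (x : ℕ → Fin N → ℝ) (G : Set (Fin N → ℝ))
    (hG : ∀ g ∈ G, ∃ M, ∀ n, |logSum (x n) g| ≤ M) :
    ∀ v ∈ Submodule.span ℝ G, ∃ M, ∀ n, |logSum (x n) v| ≤ M := by
  intro v hv
  induction hv using Submodule.span_induction with
  | mem g hg => exact hG g hg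
  | zero => exact ⟨0, fun n => by simp⟩
  | add a b _ _ ha hb =>
      obtain ⟨Ma, hMa⟩ := ha; obtain ⟨Mb, hMb⟩ := hb
      exact ⟨Ma + Mb, fun n => by
        rw [map_add]; exact (abs_add_le _ _).trans (add_le_add (hMa n) (hMb n))⟩
  | smul c a _ ha =>
      obtain ⟨Ma, hMa⟩ := ha
      exact ⟨|c| * Ma, fun n => by
        rw [map_smul, smul_eq_mul, abs_mul]
        exact mul_le_mul_of_nonneg_left (hMa n) (abs_nonneg c)⟩

lemma uniform_bound {N : ℕ} (x : ℕ → Fin N → ℝ) (S : Submodule ℝ (Fin N → ℝ))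
    (hS : ∀ v ∈ S, ∃ M, ∀ n, |logSum (x n) v| ≤ M) :
    ∃ K, 0 ≤ K ∧ ∀ n, ∀ v ∈ S, |logSum (x n) v| ≤ K * ‖v‖ := by
  classical
  let b := Module.finBasis ℝ S
  have hM : ∀ j, ∃ M, ∀ n, |logSum (x n) (b j : Fin N → ℝ)| ≤ M :=
    fun j => hS _ (b j).2
  choose M hMle using hM
  have hM0 : ∀ j, 0 ≤ M j := fun j => (abs_nonneg _).trans (hMle j 0)
  set c : Fin (Module.finrank ℝ S) → ℝ :=
    fun j => ‖LinearMap.toContinuousLinearMap (b.coord j)‖ with hc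
  have c_nonneg : ∀ j, 0 ≤ c j :=
    fun j => norm_nonneg (LinearMap.toContinuousLinearMap (b.coord j))
  refine ⟨∑ j, c j * M j,
    Finset.sum_nonneg fun j _ => mul_nonneg (c_nonneg j) (hM0 j),
    fun n v hv => ?_⟩
  set s : S := ⟨v, hv⟩ with hs
  have hrepr : (∑ j, b.repr s j • (b j : Fin N → ℝ)) = v := by
    have h := b.sum_repr s
    calc (∑ j, b.repr s j • (b j : Fin N → ℝ))
        = ((∑ j, b.repr s j • b j : S) : Fin N → ℝ) := by push_cast; rfl
    _ = v := by rw [h]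
  have hnorm : ‖s‖ = ‖v‖ := rfl
  calc |logSum (x n) v|
      = |∑ j, b.repr s j * logSum (x n) (b j : Fin N → ℝ)| := by
        rw [← hrepr, map_sum]; simp
  _ ≤ ∑ j, |b.repr s j * logSum (x n) (b j : Fin N → ℝ)| :=
        Finset.abs_sum_le_sum_abs _ _
  _ ≤ ∑ j, (c j * ‖v‖) * M j := by
        refine Finset.sum_le_sum fun j _ => ?_
        rw [abs_mul]
        refine mul_le_mul ?_ (hMle j n) (abs_nonneg _)
          (mul_nonneg (c_nonneg j) (norm_nonneg _))
        have h1 : |b.repr s j| = ‖(LinearMap.toContinuousLinearMap (b.coord j)) s‖ := by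
          simp [Real.norm_eq_abs]
        rw [h1, ← hnorm]
        exact (LinearMap.toContinuousLinearMap (b.coord j)).le_opNorm s
  _ = (∑ j, c j * M j) * ‖v‖ := by
        rw [Finset.sum_mul]; exact Finset.sum_congr rfl fun j _ => by ring


/-- **Lemma (no dominating union of linkage classes in the single linkage class case).**
Let `(𝒞, ℛ)` be a reaction network on `N` species whose reaction diagram consists of a
single linkage class.  Then there is no sequence of points `x_n ∈ ℝ^N_{>0}`, all in the
same stoichiometric compatibility class, for which `lim_n x_{n,i} ∈ {0, ∞}` for at least
one `i`, such that `𝒞` is partitioned along `(x_n)` with tiers `T_1, …, T_P` and constant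
`C`, and the top tier `T_1` consists of a union of linkage classes. -/
theorem no_union_of_linkage_classes_single_linkage
    {N : ℕ} (rn : ReactionNetwork N) (hsingle : rn.SingleLinkageClass) :
    ¬ ∃ x : ℕ → Fin N → ℝ,
        (∀ n i, 0 < x n i) ∧
        (∀ n m : ℕ, x n - x m ∈ rn.stoichSubspace) ∧
        (∃ i, Tendsto (fun n => x n i) atTop (nhds 0) ∨
              Tendsto (fun n => x n i) atTop atTop) ∧
        ∃ (P : ℕ) (hP : 0 < P) (T : Fin P → Finset (Fin N → ℝ)) (c : ℝ),
          PartitionedAlong rn.complexes x T c ∧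
          rn.IsUnionOfLinkageClasses (T ⟨0, hP⟩) := by
  rintro ⟨x, hxpos, hcompat, hi, P, hP, T, c, hpart, hunion⟩
  obtain ⟨i₀, hi₀⟩ := hi
  obtain ⟨⟨htier, hdis, hiff⟩, hc1, hcomp, -⟩ := hpart
  obtain ⟨hT0ne, hT0sub, hT0cl⟩ := hunion
  set t0 : Fin P := ⟨0, hP⟩ with ht0
  obtain ⟨z₀, hz₀⟩ := hT0ne
  have hz₀C : z₀ ∈ rn.complexes := hT0sub z₀ hz₀
  have hall : ∀ y ∈ rn.complexes, y ∈ T t0 := fun y hy =>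
    hT0cl z₀ hz₀ y hy (hsingle z₀ hz₀C y hy)
  have hcpos : (0:ℝ) < c := lt_trans one_pos hc1
  -- log-bound for each reaction vector
  have hreac : ∀ r ∈ rn.reactions, ∀ n, |logSum (x n) (r.2 - r.1)| ≤ Real.log c := by
    intro r hr n
    have hy := hall r.1 (rn.source_mem r hr)
    have hz := hall r.2 (rn.target_mem r hr)
    obtain ⟨h1, h2⟩ := hcomp t0 r.1 hy r.2 hz n
    replace h1 : 1 / c * vpow (x n) r.1 ≤ vpow (x n) r.2 := h1
    replace h2 : vpow (x n) r.2 ≤ c * vpow (x n) r.1 := h2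
    rw [vpow_eq_exp _ _ (hxpos n), vpow_eq_exp _ _ (hxpos n)] at h1 h2
    have h1' : Real.exp (logSum (x n) r.1) ≤ c * Real.exp (logSum (x n) r.2) := by
      have h := mul_le_mul_of_nonneg_left h1 hcpos.le
      rwa [← mul_assoc, mul_one_div_cancel (ne_of_gt hcpos), one_mul] at h
    have ha := sub_le_log_of_exp_le hcpos h2
    have hb := sub_le_log_of_exp_le hcpos h1'
    rw [map_sub, abs_le]
    constructor <;> linarith
  -- uniform bound on the stoichiometric subspace
  have hspanb : ∀ v ∈ rn.stoichSubspace, ∃ M, ∀ n, |logSum (x n) v| ≤ M := by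
    refine span_bound x _ fun g hg => ?_
    obtain ⟨r, hr, hgr⟩ := hg
    exact ⟨Real.log c, fun n => by rw [hgr]; exact hreac r hr n⟩
  obtain ⟨K, hK0, hK⟩ := uniform_bound x rn.stoichSubspace hspanb
  -- notation
  have hne : (Finset.univ : Finset (Fin N)).Nonempty := ⟨i₀, Finset.mem_univ _⟩
  set A : ℝ := ‖x 0‖ with hA
  have hA0 : 0 ≤ A := norm_nonneg _
  set SA : ℝ := ∑ i, x 0 i with hSA
  have hSA0 : 0 ≤ SA := Finset.sum_nonneg fun i _ => (hxpos 0 i).le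
  set Mx : ℕ → ℝ := fun n => Finset.univ.sup' hne (x n) with hMx
  have hle : ∀ n i, x n i ≤ Mx n := fun n i => Finset.le_sup' _ (Finset.mem_univ _)
  have hMxpos : ∀ n, 0 < Mx n := fun n => lt_of_lt_of_le (hxpos n i₀) (hle n i₀)
  have hlogle : ∀ n i, Real.log (x n i) ≤ x n i := fun n i => by
    have := Real.log_le_sub_one_of_pos (hxpos n i); linarith
  -- the key inequality coming from the compatibility class
  have hKey : ∀ n, |∑ i, (x n i - x 0 i) * Real.log (x n i)| ≤ K * (Mx n + A) := by
    intro n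
    have hmem : x n - x 0 ∈ rn.stoichSubspace := hcompat n 0
    have h1 := hK n (x n - x 0) hmem
    have h2 : ‖x n - x 0‖ ≤ Mx n + A := by
      refine (pi_norm_le_iff_of_nonneg (by linarith [hMxpos n])).mpr fun i => ?_
      rw [Pi.sub_apply, Real.norm_eq_abs]
      have hx0 : |x 0 i| ≤ A := norm_le_pi_norm (x 0) i
      have := abs_sub (x n i) (x 0 i)
      rw [abs_of_pos (hxpos n i)] at this
      linarith [hle n i]
    have h3 : logSum (x n) (x n - x 0) = ∑ i, (x n i - x 0 i) * Real.log (x n i) := by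
      rw [logSum_apply]; exact Finset.sum_congr rfl fun i _ => by rw [Pi.sub_apply]
    rw [← h3]
    exact h1.trans (mul_le_mul_of_nonneg_left h2 hK0)
  -- lower bound  ∑ tᵢ log tᵢ ≥ M log M − N
  have hsum1 : ∀ n, Mx n * Real.log (Mx n) - N ≤ ∑ i, x n i * Real.log (x n i) := by
    intro n
    obtain ⟨j, -, hj⟩ := Finset.exists_mem_eq_sup' hne (x n)
    have hj' : Mx n = x n j := hj
    have h0 : ∀ i ∈ Finset.univ, (0:ℝ) ≤ x n i * Real.log (x n i) + 1 :=
      fun i _ => by linarith [mul_log_ge_neg_one (hxpos n i)]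
    have hsingle : x n j * Real.log (x n j) + 1
        ≤ ∑ i, (x n i * Real.log (x n i) + 1) :=
      Finset.single_le_sum h0 (Finset.mem_univ j)
    have hcard : ∑ i : Fin N, (x n i * Real.log (x n i) + 1)
        = (∑ i, x n i * Real.log (x n i)) + N := by
      rw [Finset.sum_add_distrib]; simp
    rw [hcard] at hsingle
    rw [hj']
    linarith
  -- upper bound  ∑ aᵢ log tᵢ ≤ SA · M
  have hsum2 : ∀ n, ∑ i, x 0 i * Real.log (x n i) ≤ SA * Mx n := by
    intro n
    calc ∑ i, x 0 i * Real.log (x n i) ≤ ∑ i, x 0 i * Mx n := by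
          refine Finset.sum_le_sum fun i _ => ?_
          exact mul_le_mul_of_nonneg_left ((hlogle n i).trans (hle n i)) (hxpos 0 i).le
    _ = SA * Mx n := by rw [← Finset.sum_mul]
  have hsplit : ∀ n, ∑ i, (x n i - x 0 i) * Real.log (x n i)
      = ∑ i, x n i * Real.log (x n i) - ∑ i, x 0 i * Real.log (x n i) := by
    intro n
    rw [← Finset.sum_sub_distrib]
    exact Finset.sum_congr rfl fun i _ => by ring
  have hmain : ∀ n, Mx n * Real.log (Mx n) ≤ N + SA * Mx n + K * (Mx n + A) := by
    intro n
    have hLup := (abs_le.mp (hKey n)).2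
    rw [hsplit n] at hLup
    linarith [hsum1 n, hsum2 n]
  -- uniform boundedness of all coordinates
  set B : ℝ := max (Real.exp (SA + K + 1)) ((N:ℝ) + K * A) with hBdef
  have hB0 : 0 < B := lt_of_lt_of_le (Real.exp_pos _) (le_max_left _ _)
  have hB : ∀ n, Mx n ≤ B := by
    intro n
    by_contra hcon
    push_neg at hcon
    have h1 : Real.exp (SA + K + 1) < Mx n := lt_of_le_of_lt (le_max_left _ _) hcon
    have h2 : (N:ℝ) + K * A < Mx n := lt_of_le_of_lt (le_max_right _ _) hcon
    have hlog : SA + K + 1 < Real.log (Mx n) :=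
      (Real.lt_log_iff_exp_lt (hMxpos n)).mpr h1
    have hprod := mul_lt_mul_of_pos_left hlog (hMxpos n)
    linarith [hmain n]
  have hxB : ∀ n i, x n i ≤ B := fun n i => (hle n i).trans (hB n)
  rcases hi₀ with hi₀ | hi₀
  · -- case x n i₀ → 0
    set a0 : ℝ := x 0 i₀ with ha0def
    have ha0 : 0 < a0 := hxpos 0 i₀
    set D₂ : ℝ := K * (B + A) + N + SA * B with hD₂def
    have hg : ∀ n, (x n i₀ - a0) * Real.log (x n i₀) ≤ D₂ := by
      intro n
      have hLup := (abs_le.mp (hKey n)).2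
      have hsplit2 : ∑ i, (x n i - x 0 i) * Real.log (x n i)
          = (x n i₀ - x 0 i₀) * Real.log (x n i₀)
            + ∑ i ∈ Finset.univ.erase i₀, (x n i - x 0 i) * Real.log (x n i) :=
        (Finset.add_sum_erase _ _ (Finset.mem_univ i₀)).symm
      have hrest : ∀ i ∈ Finset.univ.erase i₀,
          -1 - x 0 i * B ≤ (x n i - x 0 i) * Real.log (x n i) := by
        intro i _
        have h1 := mul_log_ge_neg_one (hxpos n i)
        have h2 : x 0 i * Real.log (x n i) ≤ x 0 i * x n i :=
          mul_le_mul_of_nonneg_left (hlogle n i) (hxpos 0 i).le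
        have h3 : x 0 i * x n i ≤ x 0 i * B :=
          mul_le_mul_of_nonneg_left (hxB n i) (hxpos 0 i).le
        nlinarith
      have hrs : ∑ i ∈ Finset.univ.erase i₀, (-1 - x 0 i * B)
          ≤ ∑ i ∈ Finset.univ.erase i₀, (x n i - x 0 i) * Real.log (x n i) :=
        Finset.sum_le_sum hrest
      have hcardle : ((Finset.univ.erase i₀).card : ℝ) ≤ N := by
        have := Finset.card_le_univ (Finset.univ.erase i₀)
        rw [Fintype.card_fin] at this
        exact_mod_cast this
      have hsub : ∑ i ∈ Finset.univ.erase i₀, x 0 i ≤ SA :=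
        Finset.sum_le_sum_of_subset_of_nonneg (Finset.subset_univ _)
          (fun i _ _ => (hxpos 0 i).le)
      have hlow : -(N:ℝ) - SA * B ≤ ∑ i ∈ Finset.univ.erase i₀, (-1 - x 0 i * B) := by
        rw [Finset.sum_sub_distrib, Finset.sum_const, ← Finset.sum_mul]
        have hmul : (∑ i ∈ Finset.univ.erase i₀, x 0 i) * B ≤ SA * B :=
          mul_le_mul_of_nonneg_right hsub hB0.le
        simp only [nsmul_eq_mul, mul_neg_one]
        linarith
      rw [hsplit2] at hLup
      have hMB : Mx n ≤ B := hB n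
      have hKmul : K * (Mx n + A) ≤ K * (B + A) :=
        mul_le_mul_of_nonneg_left (by linarith) hK0
      rw [ha0def]
      linarith
    -- now derive the contradiction as x n i₀ → 0
    set D : ℝ := max D₂ 0 with hDdef
    have hD0 : 0 ≤ D := le_max_right _ _
    have hD₂D : D₂ ≤ D := le_max_left _ _
    set ε : ℝ := min (a0 / 2) (Real.exp (-(2 * D + 1) / a0)) with hεdef
    have hε : 0 < ε := lt_min (by positivity) (Real.exp_pos _)
    obtain ⟨n, hn⟩ := (hi₀.eventually_lt_const hε).exists
    set t : ℝ := x n i₀ with htdef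
    have htpos : 0 < t := hxpos n i₀
    have ht2 : t < a0 / 2 := lt_of_lt_of_le hn (min_le_left _ _)
    have hlt : Real.log t ≤ -(2 * D + 1) / a0 := by
      have l1 : Real.log t < Real.log ε := Real.log_lt_log htpos hn
      have l2 : Real.log ε ≤ -(2 * D + 1) / a0 := by
        have := Real.log_le_log hε (min_le_right (a0 / 2) (Real.exp (-(2 * D + 1) / a0)))
        rwa [Real.log_exp] at this
      linarith
    have k1 : a0 / 2 ≤ a0 - t := by linarith
    have k2 : (2 * D + 1) / a0 ≤ -Real.log t := by
      have : -(-(2 * D + 1) / a0) = (2 * D + 1) / a0 := by ring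
      linarith [neg_le_neg hlt, this.symm ▸ (neg_le_neg hlt)]
    have k2' : 0 ≤ (2 * D + 1) / a0 := by positivity
    have k3 : (a0 / 2) * ((2 * D + 1) / a0) ≤ (a0 - t) * (-Real.log t) :=
      mul_le_mul k1 k2 k2' (by linarith)
    have k4 : (a0 / 2) * ((2 * D + 1) / a0) = D + 1 / 2 := by
      field_simp
    have k5 : (t - a0) * Real.log t = (a0 - t) * (-Real.log t) := by ring
    have := hg n
    rw [← htdef] at this
    linarith [k4 ▸ k3, k5 ▸ this]
  · -- case x n i₀ → ∞ : contradicts the uniform bound B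
    obtain ⟨n, hn⟩ := (hi₀.eventually_gt_atTop B).exists
    exact absurd (hxB n i₀) (not_le.mpr hn)
end

section
/- Let (𝒞, ℛ) be a weakly reversible chemical reaction network on N species whose reaction diagram consists of a single linkage class, equipped with bounded mass-action kinetics given by rate functions κ_k with η < κ_k(t) < 1/η for all t ≥ 0. Let D ⊆ ℝ^N_{>0} be a (nonempty) positive stoichiometric compatibility class. Then there exists M > 0 such that for every x ∈ D for which x_i > M or x_i < 1/M for at least one i ∈ {1,…,N}, one has Σ_k κ_k(t)·x^{y_k}·(y_k' − y_k)·ln(x) < 0 for all t ≥ 0, where ln(x) = (ln x_1, …, ln x_N). -/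
open Filter

private lemma drift_term_upper' {η k a1 a2 A : ℝ} (hη : 0 < η) (hk1 : η < k) (hk2 : k < 1/η)
    (h1 : a1 ≤ A) (h2 : a2 ≤ A) :
    k * Real.exp a1 * (a2 - a1) ≤ Real.exp A / η := by
  have hk0 : 0 < k := hη.trans hk1
  rcases le_or_gt a2 a1 with h | h
  · have h0 : k * Real.exp a1 * (a2 - a1) ≤ 0 :=
      mul_nonpos_of_nonneg_of_nonpos (by positivity) (by linarith)
    have : 0 ≤ Real.exp A / η := by positivity
    linarith
  · have hexp := Real.add_one_le_exp (A - a1)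
    have h3 : Real.exp a1 * (a2 - a1) ≤ Real.exp A := by
      calc Real.exp a1 * (a2 - a1) ≤ Real.exp a1 * (A - a1) := by
            nlinarith [Real.exp_pos a1]
        _ ≤ Real.exp a1 * Real.exp (A - a1) := by nlinarith [Real.exp_pos a1]
        _ = Real.exp A := by rw [← Real.exp_add]; ring_nf
    have h4 : 0 ≤ Real.exp a1 * (a2 - a1) := by
      have := Real.exp_pos a1; nlinarith
    calc k * Real.exp a1 * (a2 - a1) = k * (Real.exp a1 * (a2 - a1)) := by ring
      _ ≤ (1/η) * (Real.exp a1 * (a2 - a1)) := mul_le_mul_of_nonneg_right hk2.le h4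
      _ ≤ (1/η) * Real.exp A := by
            have h5 : (0:ℝ) ≤ 1/η := by positivity
            exact mul_le_mul_of_nonneg_left h3 h5
      _ = Real.exp A / η := by ring

private lemma drift_term_lower_neg' {η k e1 e0 c G : ℝ} (hη : 0 < η) (hk1 : η < k)
    (he : e0 ≤ e1) (he0 : 0 < e0) (hc : c ≤ -G) (hG : 0 < G) :
    k * e1 * c ≤ η * e0 * c := by
  have hc0 : c < 0 := by linarith
  have hp : 0 < (k - η) * e1 := mul_pos (by linarith) (by linarith)
  have h1 : (k - η) * e1 * c < 0 := mul_neg_of_pos_of_neg hp hc0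
  have hq : 0 ≤ η * (e1 - e0) := mul_nonneg hη.le (by linarith)
  have h2 : η * (e1 - e0) * c ≤ 0 := mul_nonpos_of_nonneg_of_nonpos hq hc0.le
  nlinarith

private lemma combine_neg' {P Q G : ℝ} (hP : 0 < P) (h : G * P = Q + P) : Q + P * -G < 0 := by
  have h2 : P * -G = -(G * P) := by ring
  linarith
set_option maxHeartbeats 1000000 in
/-- **Lemma (negative drift on a positive stoichiometric compatibility class).**
Let `(𝒞, ℛ)` be a weakly reversible, single linkage class reaction network on `N` species
with bounded mass-action kinetics (`η < κ_k(t) < 1/η` for `t ≥ 0`), and let `D` be a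
(nonempty) positive stoichiometric compatibility class, i.e.
`D = (x_0 + S) ∩ ℝ^N_{>0}` for some `x_0 ∈ ℝ^N_{>0}`.  Then there is `M > 0` such that
for every `x ∈ D` with `x_i > M` or `x_i < 1/M` for at least one `i`, one has
`Σ_k κ_k(t) x^{y_k} (y_k' − y_k) · ln(x) < 0` for all `t ≥ 0`. -/
theorem negative_drift_on_compatibility_class
    {N : ℕ} (rn : ReactionNetwork N)
    (hwr : rn.WeaklyReversible) (hsingle : rn.SingleLinkageClass)
    (η : ℝ) (κ : ((Fin N → ℝ) × (Fin N → ℝ)) → ℝ → ℝ)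
    (hκ : rn.BoundedKinetics κ η)
    (x₀ : Fin N → ℝ) (hx₀ : ∀ i, 0 < x₀ i)
    (D : Set (Fin N → ℝ))
    (hD : D = {x : Fin N → ℝ | (∀ i, 0 < x i) ∧ x - x₀ ∈ rn.stoichSubspace}) :
    ∃ M : ℝ, 0 < M ∧ ∀ x ∈ D, (∃ i, M < x i ∨ x i < 1 / M) → ∀ t : ℝ, 0 ≤ t →
      ∑ r ∈ rn.reactions,
        κ r t * vpow x r.1 * (∑ j, (r.2 j - r.1 j) * Real.log (x j)) < 0 := by
  classical
  obtain ⟨hη, hκb⟩ := hκ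
  -- Trivial case: no reactions
  rcases Finset.eq_empty_or_nonempty rn.reactions with hR | hR
  · have hMpos : (0:ℝ) < 1 + ∑ j, (x₀ j + (x₀ j)⁻¹) := by
      have h0 : (0:ℝ) ≤ ∑ j, (x₀ j + (x₀ j)⁻¹) :=
        Finset.sum_nonneg fun j _ => by have := hx₀ j; positivity
      linarith
    refine ⟨1 + ∑ j, (x₀ j + (x₀ j)⁻¹), hMpos, ?_⟩
    intro x hx hesc t ht
    exfalso
    have hSbot : rn.stoichSubspace = ⊥ := by
      have hset : {v : Fin N → ℝ | ∃ r ∈ rn.reactions, v = r.2 - r.1} = ∅ := by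
        ext v; simp [hR]
      rw [ReactionNetwork.stoichSubspace, hset, Submodule.span_empty]
    rw [hD] at hx
    have hxeq : x = x₀ := by
      have h1 := hx.2
      rw [hSbot, Submodule.mem_bot] at h1
      exact sub_eq_zero.mp h1
    obtain ⟨i, hi⟩ := hesc
    have hterm : x₀ i + (x₀ i)⁻¹ ≤ ∑ j, (x₀ j + (x₀ j)⁻¹) :=
      Finset.single_le_sum (f := fun j => x₀ j + (x₀ j)⁻¹)
        (fun j _ => by have := hx₀ j; positivity) (Finset.mem_univ i)
    have hxi := hx₀ i
    have hxiinv : 0 < (x₀ i)⁻¹ := by positivity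
    have h1 : x₀ i < 1 + ∑ j, (x₀ j + (x₀ j)⁻¹) := by linarith
    have h2 : 1 / (1 + ∑ j, (x₀ j + (x₀ j)⁻¹)) ≤ x₀ i := by
      rw [div_le_iff₀ hMpos]
      have hMi : (x₀ i)⁻¹ ≤ 1 + ∑ j, (x₀ j + (x₀ j)⁻¹) := by linarith
      calc (1:ℝ) = x₀ i * (x₀ i)⁻¹ := (mul_inv_cancel₀ hxi.ne').symm
        _ ≤ x₀ i * (1 + ∑ j, (x₀ j + (x₀ j)⁻¹)) := mul_le_mul_of_nonneg_left hMi hxi.le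
    rw [hxeq] at hi
    rcases hi with h | h
    · linarith
    · linarith
  -- Main case
  obtain ⟨r₀, hr₀⟩ := hR
  have hCne : rn.complexes.Nonempty := ⟨r₀.1, rn.source_mem r₀ hr₀⟩
  by_contra hcon
  push_neg at hcon
  have hseq : ∀ n : ℕ, ∃ x, x ∈ D ∧ (∃ i, ((n:ℝ)+1) < x i ∨ x i < 1/((n:ℝ)+1)) ∧
      ∃ t, 0 ≤ t ∧ 0 ≤ ∑ r ∈ rn.reactions,
        κ r t * vpow x r.1 * (∑ j, (r.2 j - r.1 j) * Real.log (x j)) := by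
    intro n
    obtain ⟨x, hx1, hx2, t, ht, hle⟩ := hcon ((n:ℝ)+1) (by positivity)
    exact ⟨x, hx1, hx2, t, ht, hle⟩
  choose X hXD hXesc T hT0 hTF using hseq
  have hXpos : ∀ n i, 0 < X n i := fun n i => by
    have h := hXD n; rw [hD] at h; exact h.1 i
  have hXS : ∀ n, X n - x₀ ∈ rn.stoichSubspace := fun n => by
    have h := hXD n; rw [hD] at h; exact h.2
  set u : ℕ → Fin N → ℝ := fun n i => Real.log (X n i) with hu
  set a : (Fin N → ℝ) → ℕ → ℝ := fun y n => ∑ i, y i * u n i with ha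
  have hvpow : ∀ (n : ℕ) (y : Fin N → ℝ), vpow (X n) y = Real.exp (a y n) := by
    intro n y
    simp only [ha, hu, vpow]
    rw [Real.exp_sum]
    exact Finset.prod_congr rfl fun i _ => by
      rw [Real.rpow_def_of_pos (hXpos n i), mul_comm]
  have hdiffsum : ∀ (r : (Fin N → ℝ) × (Fin N → ℝ)) (n : ℕ),
      (∑ j, (r.2 j - r.1 j) * Real.log (X n j)) = a r.2 n - a r.1 n := by
    intro r n
    simp only [ha, hu]
    rw [← Finset.sum_sub_distrib]
    exact Finset.sum_congr rfl fun i _ => by ring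
  -- the log-vector tends to infinity in norm
  have hlogn : Tendsto (fun n : ℕ => Real.log ((n:ℝ)+1)) atTop atTop :=
    Real.tendsto_log_atTop.comp (tendsto_atTop_add_const_right _ 1 tendsto_natCast_atTop_atTop)
  have hnormlb : ∀ n : ℕ, Real.log ((n:ℝ)+1) ≤ ‖u n‖ := by
    intro n
    obtain ⟨i, hi⟩ := hXesc n
    have habs : |u n i| ≤ ‖u n‖ := by
      have h := norm_le_pi_norm (u n) i; rwa [Real.norm_eq_abs] at h
    have habs' : |Real.log (X n i)| ≤ ‖u n‖ := habs
    rcases hi with h | h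
    · have h1 : Real.log ((n:ℝ)+1) ≤ Real.log (X n i) :=
        Real.log_le_log (by positivity) h.le
      have h2 := le_abs_self (Real.log (X n i))
      linarith
    · have h1 : Real.log (X n i) ≤ Real.log (1/((n:ℝ)+1)) :=
        Real.log_le_log (hXpos n i) h.le
      rw [one_div, Real.log_inv] at h1
      have h2 := neg_abs_le (Real.log (X n i))
      linarith
  have hnorm : Tendsto (fun n => ‖u n‖) atTop atTop :=
    tendsto_atTop_mono' atTop (Filter.Eventually.of_forall hnormlb) hlogn
  -- ultrafilter refining atTop
  set U : Ultrafilter ℕ := Ultrafilter.of atTop with hUdef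
  have hUle : (U : Filter ℕ) ≤ atTop := Ultrafilter.of_le _
  have hnormU : Tendsto (fun n => ‖u n‖) (U : Filter ℕ) atTop := hnorm.mono_left hUle
  have hbig : ∀ᶠ n in (U : Filter ℕ), 1 ≤ ‖u n‖ := hnormU.eventually_ge_atTop 1
  -- an U-almost-always argmax complex ys
  have hmaxex : ∀ n, ∃ y ∈ rn.complexes, ∀ z ∈ rn.complexes, a z n ≤ a y n :=
    fun n => Finset.exists_max_image rn.complexes (fun y => a y n) hCne
  choose m hmC hmmax using hmaxex
  have hfiber : ∃ y ∈ rn.complexes, {n | m n = y} ∈ U := by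
    by_contra hno
    push_neg at hno
    have hcompl : ∀ y ∈ (rn.complexes : Set (Fin N → ℝ)), {n | m n = y}ᶜ ∈ U := fun y hy =>
      Ultrafilter.compl_mem_iff_notMem.2 (hno y hy)
    have hint : (⋂ y ∈ (rn.complexes : Set (Fin N → ℝ)), {n | m n = y}ᶜ) ∈ U :=
      (biInter_mem rn.complexes.finite_toSet).2 hcompl
    obtain ⟨n, hn⟩ := Filter.nonempty_of_mem hint
    simp only [Set.mem_iInter, Set.mem_compl_iff, Set.mem_setOf_eq] at hn
    exact hn (m n) (hmC n) rfl
  obtain ⟨ys, hysC, hysU⟩ := hfiber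
  have hmaxev : ∀ᶠ n in (U : Filter ℕ), ∀ y ∈ rn.complexes, a y n ≤ a ys n := by
    filter_upwards [hysU] with n hn y hy
    have hmn : m n = ys := hn
    calc a y n ≤ a (m n) n := hmmax n y hy
      _ = a ys n := by rw [hmn]
  -- bounded tiers
  set Bdd : (Fin N → ℝ) → Prop :=
    fun y => ∃ K : ℝ, ∀ᶠ n in (U : Filter ℕ), a ys n - a y n ≤ K with hBdd
  have hUnbdd : ∀ y, ¬ Bdd y → ∀ b : ℝ, ∀ᶠ n in (U : Filter ℕ), b < a ys n - a y n := by
    intro y hy b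
    have h1 : ¬ (∀ᶠ n in (U : Filter ℕ), a ys n - a y n ≤ b) := fun h => hy ⟨b, h⟩
    have h2 : {n | a ys n - a y n ≤ b}ᶜ ∈ U := Ultrafilter.compl_mem_iff_notMem.2 h1
    filter_upwards [h2] with n hn
    exact not_le.mp hn
  -- Stage 1: there is a complex with unbounded gap (spread)
  have hexz : ∃ z ∈ rn.complexes, ¬ Bdd z := by
    by_contra hall
    push_neg at hall
    set v : ℕ → Fin N → ℝ := fun n => ‖u n‖⁻¹ • u n with hv
    have hvs : ∀ᶠ n in (U : Filter ℕ), v n ∈ Metric.sphere (0 : Fin N → ℝ) 1 := by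
      filter_upwards [hbig] with n hn
      rw [mem_sphere_zero_iff_norm]
      simp only [hv, norm_smul, norm_inv, norm_norm]
      rw [inv_mul_cancel₀ (by linarith)]
    have hmem : (Ultrafilter.map v U : Filter (Fin N → ℝ)) ≤
        Filter.principal (Metric.sphere (0 : Fin N → ℝ) 1) := by
      rw [Filter.le_principal_iff, Ultrafilter.coe_map, Filter.mem_map]
      exact hvs
    obtain ⟨w, hwsph, hwle⟩ :=
      (isCompact_sphere (0 : Fin N → ℝ) 1).ultrafilter_le_nhds (Ultrafilter.map v U) hmem
    have hvw : Tendsto v (U : Filter ℕ) (nhds w) := by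
      rw [Filter.Tendsto, ← Ultrafilter.coe_map]; exact hwle
    have hwnorm : ‖w‖ = 1 := mem_sphere_zero_iff_norm.mp hwsph
    have hcoord : ∀ i, Tendsto (fun n => v n i) (U : Filter ℕ) (nhds (w i)) :=
      fun i => ((continuous_apply i).tendsto w).comp hvw
    have hperp : ∀ r ∈ rn.reactions, ∑ i, (r.2 i - r.1 i) * w i = 0 := by
      intro r hr
      obtain ⟨K1, hK1⟩ := hall r.1 (rn.source_mem r hr)
      obtain ⟨K2, hK2⟩ := hall r.2 (rn.target_mem r hr)
      have hbound : ∀ᶠ n in (U : Filter ℕ), |∑ i, (r.2 i - r.1 i) * u n i| ≤ K1 + K2 := by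
        filter_upwards [hK1, hK2, hmaxev] with n h1 h2 h3
        have e1 : ∑ i, (r.2 i - r.1 i) * u n i = a r.2 n - a r.1 n := by
          simp only [ha]
          rw [← Finset.sum_sub_distrib]
          exact Finset.sum_congr rfl fun i _ => by ring
        have d1 := h3 r.1 (rn.source_mem r hr)
        have d2 := h3 r.2 (rn.target_mem r hr)
        rw [e1, abs_le]
        constructor <;> linarith
      have hz : Tendsto (fun n => ∑ i, (r.2 i - r.1 i) * v n i) (U : Filter ℕ) (nhds 0) := by
        apply squeeze_zero_norm' (a := fun n => (K1+K2) * ‖u n‖⁻¹)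
        · filter_upwards [hbound, hbig] with n hb hn
          have e2 : ∑ i, (r.2 i - r.1 i) * v n i = ‖u n‖⁻¹ * ∑ i, (r.2 i - r.1 i) * u n i := by
            rw [Finset.mul_sum]
            exact Finset.sum_congr rfl fun i _ => by
              simp only [hv, Pi.smul_apply, smul_eq_mul]; ring
          rw [Real.norm_eq_abs, e2, abs_mul, abs_inv, abs_norm, mul_comm (K1+K2)]
          exact mul_le_mul_of_nonneg_left hb (inv_nonneg.2 (by linarith))
        · have h0 : Tendsto (fun n => ‖u n‖⁻¹) (U : Filter ℕ) (nhds 0) :=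
            hnormU.inv_tendsto_atTop
          have h1 := h0.const_mul (K1+K2)
          simpa using h1
      have hl2 : Tendsto (fun n => ∑ i, (r.2 i - r.1 i) * v n i) (U : Filter ℕ)
          (nhds (∑ i, (r.2 i - r.1 i) * w i)) := by
        have hcont : Continuous (fun p : Fin N → ℝ => ∑ i, (r.2 i - r.1 i) * p i) :=
          continuous_finset_sum _ fun i _ => continuous_const.mul (continuous_apply i)
        exact (hcont.tendsto w).comp hvw
      exact tendsto_nhds_unique hl2 hz
    have hphiS : ∀ s ∈ rn.stoichSubspace, ∑ i, w i * s i = 0 := by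
      intro s hs
      induction hs using Submodule.span_induction with
      | mem p hp =>
        obtain ⟨r, hr, rfl⟩ := hp
        rw [← hperp r hr]
        exact Finset.sum_congr rfl fun i _ => by simp only [Pi.sub_apply]; ring
      | zero => simp
      | add p q hp hq ihp ihq =>
        simp only [Pi.add_apply, mul_add, Finset.sum_add_distrib, ihp, ihq, add_zero]
      | smul c p hp ihp =>
        have e3 : ∑ i, w i * (c • p) i = c * ∑ i, w i * p i := by
          rw [Finset.mul_sum]
          exact Finset.sum_congr rfl fun i _ => by
            simp only [Pi.smul_apply, smul_eq_mul]; ring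
        rw [e3, ihp, mul_zero]
    have hconst : ∀ n, ∑ i, w i * X n i = ∑ i, w i * x₀ i := by
      intro n
      have h0 := hphiS _ (hXS n)
      have e4 : ∑ i, w i * (X n - x₀) i = ∑ i, w i * X n i - ∑ i, w i * x₀ i := by
        rw [← Finset.sum_sub_distrib]
        exact Finset.sum_congr rfl fun i _ => by simp only [Pi.sub_apply]; ring
      rw [e4] at h0
      linarith
    have heqc : ∀ᶠ n in (U : Filter ℕ), ∀ i, u n i = ‖u n‖ * v n i := by
      filter_upwards [hbig] with n hn i
      simp only [hv, Pi.smul_apply, smul_eq_mul]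
      rw [← mul_assoc, mul_inv_cancel₀ (by linarith : ‖u n‖ ≠ 0), one_mul]
    have hposlim : ∀ i, 0 < w i → Tendsto (fun n => X n i) (U : Filter ℕ) atTop := by
      intro i hwi
      have h1 : ∀ᶠ n in (U : Filter ℕ), w i / 2 ≤ v n i :=
        (hcoord i).eventually (eventually_ge_nhds (by linarith))
      have h2 : Tendsto (fun n => u n i) (U : Filter ℕ) atTop := by
        apply tendsto_atTop_mono' (U : Filter ℕ) (f₁ := fun n => ‖u n‖ * (w i / 2))
        · filter_upwards [h1, heqc] with n hn he
          rw [he i]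
          exact mul_le_mul_of_nonneg_left hn (norm_nonneg _)
        · exact hnormU.atTop_mul_const (by linarith)
      have h3 : Tendsto (fun n => Real.exp (u n i)) (U : Filter ℕ) atTop :=
        Real.tendsto_exp_atTop.comp h2
      exact h3.congr fun n => Real.exp_log (hXpos n i)
    have hneglim : ∀ i, w i < 0 → Tendsto (fun n => X n i) (U : Filter ℕ) (nhds 0) := by
      intro i hwi
      have h1 : ∀ᶠ n in (U : Filter ℕ), v n i ≤ w i / 2 :=
        (hcoord i).eventually (eventually_le_nhds (by linarith))
      have h2 : Tendsto (fun n => u n i) (U : Filter ℕ) atBot := by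
        apply tendsto_atBot_mono' (U : Filter ℕ) (f₁ := fun n => ‖u n‖ * (w i / 2))
        · filter_upwards [h1, heqc] with n hn he
          rw [he i]
          exact mul_le_mul_of_nonneg_left hn (norm_nonneg _)
        · exact hnormU.atTop_mul_const_of_neg (by linarith)
      have h3 : Tendsto (fun n => Real.exp (u n i)) (U : Filter ℕ) (nhds 0) :=
        Real.tendsto_exp_atBot.comp h2
      exact h3.congr fun n => Real.exp_log (hXpos n i)
    by_cases hp : ∃ i, 0 < w i
    · obtain ⟨i0, hi0⟩ := hp
      have hnegpart : Tendsto
          (fun n => ∑ i ∈ Finset.univ.filter (fun i => ¬ 0 ≤ w i), w i * X n i)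
          (U : Filter ℕ) (nhds 0) := by
        have h0 := tendsto_finset_sum (f := fun i n => w i * X n i)
          (Finset.univ.filter (fun i => ¬ 0 ≤ w i)) (a := fun _ => (0:ℝ))
          (fun i hi => by
            have hwi : w i < 0 := not_le.mp (Finset.mem_filter.mp hi).2
            simpa using (hneglim i hwi).const_mul (w i))
        simpa using h0
      have hpospart : Tendsto
          (fun n => ∑ i ∈ Finset.univ.filter (fun i => 0 ≤ w i), w i * X n i)
          (U : Filter ℕ) atTop := by
        apply tendsto_atTop_mono' (U : Filter ℕ) (f₁ := fun n => w i0 * X n i0)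
        · refine Filter.Eventually.of_forall fun n => ?_
          show w i0 * X n i0 ≤ ∑ i ∈ Finset.univ.filter (fun i => 0 ≤ w i), w i * X n i
          refine Finset.single_le_sum (f := fun i => w i * X n i) (fun i hi => ?_) ?_
          · exact mul_nonneg (Finset.mem_filter.mp hi).2 (hXpos n i).le
          · exact Finset.mem_filter.mpr ⟨Finset.mem_univ _, hi0.le⟩
        · exact (hposlim i0 hi0).const_mul_atTop hi0
      have hevneg : ∀ᶠ n in (U : Filter ℕ),
          (-1:ℝ) ≤ ∑ i ∈ Finset.univ.filter (fun i => ¬ 0 ≤ w i), w i * X n i :=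
        hnegpart.eventually (eventually_ge_nhds (by norm_num))
      have htot : Tendsto (fun n => ∑ i, w i * X n i) (U : Filter ℕ) atTop := by
        apply tendsto_atTop_mono' (U : Filter ℕ)
          (f₁ := fun n => (∑ i ∈ Finset.univ.filter (fun i => 0 ≤ w i), w i * X n i) + (-1))
        · filter_upwards [hevneg] with n hn
          rw [← Finset.sum_filter_add_sum_filter_not Finset.univ (fun i => 0 ≤ w i)
            (fun i => w i * X n i)]
          linarith
        · exact tendsto_atTop_add_const_right _ _ hpospart
      have hconsttop : Tendsto (fun _ : ℕ => ∑ i, w i * x₀ i) (U : Filter ℕ) atTop :=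
        (htot.congr fun n => hconst n)
      obtain ⟨n, hn⟩ := (hconsttop.eventually_ge_atTop (∑ i, w i * x₀ i + 1)).exists
      linarith
    · push_neg at hp
      have hzero : Tendsto (fun n => ∑ i, w i * X n i) (U : Filter ℕ) (nhds 0) := by
        have h0 := tendsto_finset_sum (f := fun (i : Fin N) n => w i * X n i)
          Finset.univ (a := fun _ => (0:ℝ))
          (fun i _ => by
            rcases lt_or_eq_of_le (hp i) with h | h
            · simpa using (hneglim i h).const_mul (w i)
            · simp only [h, zero_mul]
              exact tendsto_const_nhds)
        simpa using h0
      have hceq : (∑ i, w i * x₀ i) = 0 := by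
        have h1 : Tendsto (fun _ : ℕ => ∑ i, w i * x₀ i) (U : Filter ℕ) (nhds 0) :=
          (hzero.congr fun n => hconst n)
        exact tendsto_nhds_unique tendsto_const_nhds h1
      have hwne : ∃ i, w i ≠ 0 := by
        by_contra hforall
        push_neg at hforall
        have hw0 : w = 0 := funext hforall
        rw [hw0] at hwnorm; simp at hwnorm
      obtain ⟨i1, hi1⟩ := hwne
      have hi1' : w i1 < 0 := lt_of_le_of_ne (hp i1) hi1
      have hlt : ∑ i, w i * x₀ i < 0 := by
        have h2 := Finset.sum_lt_sum (f := fun i => w i * x₀ i) (g := fun _ => (0:ℝ))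
          (fun i _ => mul_nonpos_iff.2 (Or.inr ⟨hp i, (hx₀ i).le⟩))
          ⟨i1, Finset.mem_univ _, mul_neg_of_neg_of_pos hi1' (hx₀ i1)⟩
        simpa using h2
      linarith
  -- Stage 2: there is a reaction from the bounded tier to an unbounded one
  obtain ⟨z, hzC, hzU⟩ := hexz
  have hedge : ∃ r ∈ rn.reactions, Bdd r.1 ∧ ¬ Bdd r.2 := by
    by_contra hcl
    push_neg at hcl
    have hreach : rn.DirReach ys z := hwr ys hysC z hzC (hsingle ys hysC z hzC)
    have hBys : Bdd ys := ⟨0, Filter.Eventually.of_forall fun n => by simp⟩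
    have hallreach : ∀ p, rn.DirReach ys p → Bdd p := by
      intro p hp
      induction hp with
      | refl => exact hBys
      | tail hab hbc ih => exact hcl _ hbc ih
    exact hzU (hallreach z hreach)
  -- Stage 3: the drift is eventually negative, contradiction
  obtain ⟨r, hrR, ⟨K, hK⟩, hrt⟩ := hedge
  have hcard : (0:ℝ) ≤ (rn.reactions.card : ℝ) := Nat.cast_nonneg _
  have hGpos : (0:ℝ) < (rn.reactions.card : ℝ) / η * Real.exp K / η + 1 := by
    have h0 : (0:ℝ) ≤ (rn.reactions.card : ℝ) / η * Real.exp K / η :=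
      div_nonneg (mul_nonneg (div_nonneg hcard hη.le) (Real.exp_pos K).le) hη.le
    linarith
  set G : ℝ := (rn.reactions.card : ℝ) / η * Real.exp K / η + 1 with hGdef
  have hdrop := hUnbdd r.2 hrt (K + G)
  obtain ⟨n, hn1, hn2, hn3⟩ := (hmaxev.and (hK.and hdrop)).exists
  have hys_le : a r.1 n ≤ a ys n := hn1 r.1 (rn.source_mem r hrR)
  have hc : a r.2 n - a r.1 n ≤ -G := by linarith
  have hFn := hTF n
  have hterm_eq : ∀ r' : (Fin N → ℝ) × (Fin N → ℝ),
      κ r' (T n) * vpow (X n) r'.1 * (∑ j, (r'.2 j - r'.1 j) * Real.log (X n j)) =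
      κ r' (T n) * Real.exp (a r'.1 n) * (a r'.2 n - a r'.1 n) := by
    intro r'
    rw [hvpow, hdiffsum]
  have herase : ∑ r' ∈ rn.reactions.erase r,
      κ r' (T n) * vpow (X n) r'.1 * (∑ j, (r'.2 j - r'.1 j) * Real.log (X n j)) ≤
      (rn.reactions.card : ℝ) * (Real.exp (a ys n) / η) := by
    have hb : ∀ r' ∈ rn.reactions.erase r,
        κ r' (T n) * vpow (X n) r'.1 * (∑ j, (r'.2 j - r'.1 j) * Real.log (X n j)) ≤
        Real.exp (a ys n) / η := by
      intro r' hr'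
      have hr'R := Finset.mem_of_mem_erase hr'
      rw [hterm_eq]
      exact drift_term_upper' hη ((hκb r' hr'R (T n) (hT0 n)).1) ((hκb r' hr'R (T n) (hT0 n)).2)
        (hn1 r'.1 (rn.source_mem r' hr'R)) (hn1 r'.2 (rn.target_mem r' hr'R))
    calc ∑ r' ∈ rn.reactions.erase r,
        κ r' (T n) * vpow (X n) r'.1 * (∑ j, (r'.2 j - r'.1 j) * Real.log (X n j)) ≤
        (rn.reactions.erase r).card • (Real.exp (a ys n) / η) :=
          Finset.sum_le_card_nsmul _ _ _ hb
      _ = ((rn.reactions.erase r).card : ℝ) * (Real.exp (a ys n) / η) := nsmul_eq_mul _ _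
      _ ≤ (rn.reactions.card : ℝ) * (Real.exp (a ys n) / η) := by
          have hle : ((rn.reactions.erase r).card : ℝ) ≤ (rn.reactions.card : ℝ) := by
            exact_mod_cast Finset.card_erase_le
          have hpos : (0:ℝ) ≤ Real.exp (a ys n) / η :=
            div_nonneg (Real.exp_pos _).le hη.le
          exact mul_le_mul_of_nonneg_right hle hpos
  have hspec : κ r (T n) * vpow (X n) r.1 * (∑ j, (r.2 j - r.1 j) * Real.log (X n j)) ≤
      η * Real.exp (a ys n - K) * (-G) := by
    rw [hterm_eq]
    have he1 : Real.exp (a ys n - K) ≤ Real.exp (a r.1 n) := Real.exp_le_exp.2 (by linarith)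
    have h1 := drift_term_lower_neg' hη ((hκb r hrR (T n) (hT0 n)).1) he1
      (Real.exp_pos _) hc hGpos
    have h2 : η * Real.exp (a ys n - K) * (a r.2 n - a r.1 n) ≤
        η * Real.exp (a ys n - K) * (-G) :=
      mul_le_mul_of_nonneg_left hc (mul_nonneg hη.le (Real.exp_pos _).le)
    linarith
  have hEK : Real.exp (a ys n - K) * Real.exp K = Real.exp (a ys n) := by
    rw [← Real.exp_add]; ring_nf
  have hid : G * (η * Real.exp (a ys n - K)) =
      (rn.reactions.card : ℝ) * (Real.exp (a ys n) / η) + η * Real.exp (a ys n - K) := by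
    rw [hGdef, ← hEK]
    field_simp
  have hfinal : (rn.reactions.card : ℝ) * (Real.exp (a ys n) / η) +
      η * Real.exp (a ys n - K) * (-G) < 0 := by
    have hE : 0 < η * Real.exp (a ys n - K) := mul_pos hη (Real.exp_pos _)
    have := combine_neg' hE hid
    calc (rn.reactions.card : ℝ) * (Real.exp (a ys n) / η) + η * Real.exp (a ys n - K) * (-G)
        = (rn.reactions.card : ℝ) * (Real.exp (a ys n) / η) +
          (η * Real.exp (a ys n - K)) * -G := by ring
      _ < 0 := this
  have hsum_lt : ∑ r' ∈ rn.reactions,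
      κ r' (T n) * vpow (X n) r'.1 * (∑ j, (r'.2 j - r'.1 j) * Real.log (X n j)) < 0 := by
    rw [← Finset.sum_erase_add rn.reactions _ hrR]
    beta_reduce
    calc ∑ x ∈ rn.reactions.erase r,
          κ x (T n) * vpow (X n) x.1 * ∑ j, (x.2 j - x.1 j) * Real.log (X n j) +
          κ r (T n) * vpow (X n) r.1 * ∑ j, (r.2 j - r.1 j) * Real.log (X n j) ≤
        (rn.reactions.card : ℝ) * (Real.exp (a ys n) / η) +
          η * Real.exp (a ys n - K) * (-G) := add_le_add herase hspec
      _ < 0 := hfinal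
  linarith
end

section
/- Let (𝒞, ℛ) be a weakly reversible chemical reaction network on N species whose reaction diagram consists of a single linkage class, equipped with bounded mass-action kinetics given by rate functions κ_k with η < κ_k(t) < 1/η for all t ≥ 0. Let P be a positive stoichiometric compatibility class, and for each x_0 ∈ P let φ(·, x_0) : [0,∞) → ℝ^N_{>0} be a differentiable trajectory of the system with φ(0, x_0) = x_0, i.e., ∂_t φ(t, x_0) = Σ_k κ_k(t)·φ(t,x_0)^{y_k}·(y_k' − y_k) for all t ≥ 0. Suppose there exists δ > 0 such that liminf_{t→∞} φ_i(t, x_0) > δ for all i ∈ {1,…,N} and all x_0 ∈ P. Then there exists ρ > 0 such that for every x_0 ∈ P and every i ∈ {1,…,N}: ρ < liminf_{t→∞} φ_i(t, x_0) ≤ limsup_{t→∞} φ_i(t, x_0) < 1/ρ. That is, the system is permanent on P. -/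
open Filter

/-! ### Auxiliary development -/

open Filter Real Set

section Aux

variable {N : ℕ}

/-- `θ_x(y) = ∑ i, y i * log (x i)`, so that `vpow x y = exp (θ_x y)` for positive `x`. -/
noncomputable def theta (x y : Fin N → ℝ) : ℝ := ∑ i, y i * Real.log (x i)

lemma vpow_eq_exp_s9 {x : Fin N → ℝ} (y : Fin N → ℝ) (hx : ∀ i, 0 < x i) :
    vpow x y = Real.exp (theta x y) := by
  rw [theta, Real.exp_sum, vpow]
  exact Finset.prod_congr rfl fun i _ => by
    rw [Real.rpow_def_of_pos (hx i), mul_comm]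

lemma exp_mul_sub_le (a b : ℝ) : Real.exp a * (b - a) ≤ Real.exp b := by
  have h := Real.add_one_le_exp (b - a)
  have h2 : Real.exp a * ((b - a) + 1) ≤ Real.exp a * Real.exp (b - a) := by
    have := Real.exp_pos a
    nlinarith
  rw [← Real.exp_add] at h2
  have h3 : a + (b - a) = b := by ring
  rw [h3] at h2
  nlinarith [Real.exp_pos a]

/-- The identification of `Fin N → ℝ` with euclidean space. -/
noncomputable def toE {N : ℕ} : (Fin N → ℝ) ≃ₗ[ℝ] EuclideanSpace ℝ (Fin N) :=
  (WithLp.linearEquiv 2 ℝ (Fin N → ℝ)).symm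

lemma toE_apply (u : Fin N → ℝ) (i : Fin N) : (toE u) i = u i := rfl

/-- real inner product on euclidean space, as a plain function -/
noncomputable def ip (a b : EuclideanSpace ℝ (Fin N)) : ℝ := inner ℝ a b

lemma inner_toE (u v : Fin N → ℝ) :
    ip (toE u) (toE v) = ∑ i, u i * v i := by
  rw [ip]
  rw [PiLp.inner_apply]
  simp [RCLike.inner_apply, toE_apply, mul_comm]

lemma coord_le_norm (x : EuclideanSpace ℝ (Fin N)) (i : Fin N) : |x i| ≤ ‖x‖ := by
  rw [EuclideanSpace.norm_eq, ← Real.sqrt_sq_eq_abs]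
  apply Real.sqrt_le_sqrt
  have h := Finset.single_le_sum (f := fun j => ‖x j‖ ^ 2) (fun j _ => by positivity)
    (Finset.mem_univ i)
  simpa [sq_abs] using h

/-- The stoichiometric subspace transported to euclidean space. -/
noncomputable def stoichE (rn : ReactionNetwork N) : Submodule ℝ (EuclideanSpace ℝ (Fin N)) :=
  rn.stoichSubspace.map (toE : (Fin N → ℝ) ≃ₗ[ℝ] EuclideanSpace ℝ (Fin N)).toLinearMap

lemma mem_stoichE {rn : ReactionNetwork N} {v : Fin N → ℝ} (hv : v ∈ rn.stoichSubspace) :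
    toE v ∈ stoichE rn := Submodule.mem_map_of_mem hv

lemma theta_sub (x y z : Fin N → ℝ) :
    theta x y - theta x z = ∑ i, (y i - z i) * Real.log (x i) := by
  rw [theta, theta, ← Finset.sum_sub_distrib]
  exact Finset.sum_congr rfl fun i _ => by ring

set_option maxHeartbeats 1600000 in
/-- Uniform bound on pairings with vectors of the stoichiometric subspace. -/
lemma pairing_bound (rn : ReactionNetwork N) :
    ∃ K : ℝ, 0 ≤ K ∧ ∀ (u : Fin N → ℝ) (b : ℝ), 0 ≤ b →
      (∀ r ∈ rn.reactions, |∑ i, (r.2 i - r.1 i) * Real.log (u i)| ≤ b) →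
      ∀ s ∈ stoichE rn, |ip s (toE (fun i => Real.log (u i)))| ≤ K * b * ‖s‖ := by
  classical
  set g : {r // r ∈ rn.reactions} → EuclideanSpace ℝ (Fin N) :=
    fun r => toE (r.1.2 - r.1.1) with hg
  set T : ({r // r ∈ rn.reactions} → ℝ) →ₗ[ℝ] EuclideanSpace ℝ (Fin N) :=
    Fintype.linearCombination ℝ g with hT
  have hTapp : ∀ c, T c = ∑ r : {r // r ∈ rn.reactions}, c r • g r := by
    intro c
    simp [hT, Fintype.linearCombination_apply]
  have hrange : LinearMap.range T = stoichE rn := by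
    rw [hT, Fintype.range_linearCombination]
    rw [stoichE, ReactionNetwork.stoichSubspace, Submodule.map_span]
    congr 1
    ext e
    constructor
    · rintro ⟨r, rfl⟩
      exact ⟨r.1.2 - r.1.1, ⟨r.1, r.2, rfl⟩, rfl⟩
    · rintro ⟨v, ⟨r, hr, rfl⟩, rfl⟩
      exact ⟨⟨r, hr⟩, rfl⟩
  have hmem : ∀ c, T c ∈ stoichE rn := fun c => hrange ▸ LinearMap.mem_range_self T c
  set Tc : ({r // r ∈ rn.reactions} → ℝ) →ₗ[ℝ] (stoichE rn) :=
    T.codRestrict (stoichE rn) hmem with hTc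
  have hsurj : LinearMap.range Tc = ⊤ := by
    rw [LinearMap.range_eq_top]
    rintro ⟨s, hs⟩
    rw [← hrange] at hs
    obtain ⟨c, hc⟩ := hs
    exact ⟨c, Subtype.ext hc⟩
  obtain ⟨ψ, hψ⟩ := LinearMap.exists_rightInverse_of_surjective Tc hsurj
  set ψc := LinearMap.toContinuousLinearMap ψ with hψc
  refine ⟨(Fintype.card {r // r ∈ rn.reactions}) * ‖ψc‖, by positivity, ?_⟩
  intro u b hb hu s hs
  set sv : (stoichE rn) := ⟨s, hs⟩ with hsv
  have hTs : T (ψ sv) = s := by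
    have : Tc (ψ sv) = sv := by
      rw [← LinearMap.comp_apply, hψ]; rfl
    have := congrArg (Subtype.val) this
    simpa [hTc, LinearMap.codRestrict] using this
  have hinner : ip s (toE (fun i => Real.log (u i)))
      = ∑ r : {r // r ∈ rn.reactions}, (ψ sv r) * ip (g r) (toE (fun i => Real.log (u i))) := by
    rw [← hTs, hTapp, ip, sum_inner]
    exact Finset.sum_congr rfl fun r _ => real_inner_smul_left _ _ _
  have hgr : ∀ r : {r // r ∈ rn.reactions},
      |ip (g r) (toE (fun i => Real.log (u i)))| ≤ b := by
    intro r
    have : ip (g r) (toE (fun i => Real.log (u i)))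
        = ∑ i, (r.1.2 i - r.1.1 i) * Real.log (u i) := by
      rw [hg, inner_toE (r.1.2 - r.1.1) (fun i => Real.log (u i))]
      rfl
    rw [this]
    exact hu r.1 r.2
  rw [hinner]
  calc |∑ r : {r // r ∈ rn.reactions}, (ψ sv r) * ip (g r) (toE (fun i => Real.log (u i)))|
      ≤ ∑ r : {r // r ∈ rn.reactions}, |(ψ sv r) * ip (g r) (toE (fun i => Real.log (u i)))| :=
        Finset.abs_sum_le_sum_abs _ _
    _ ≤ ∑ _r : {r // r ∈ rn.reactions}, ‖ψc‖ * ‖sv‖ * b := by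
        apply Finset.sum_le_sum
        intro r _
        rw [abs_mul]
        have h1 : |ψ sv r| ≤ ‖ψ sv‖ := norm_le_pi_norm (ψ sv) r
        have h2 : ‖ψ sv‖ ≤ ‖ψc‖ * ‖sv‖ := by
          have : ψ sv = ψc sv := rfl
          rw [this]
          exact ψc.le_opNorm sv
        have h3 := hgr r
        have h4 : (0:ℝ) ≤ |ψ sv r| := abs_nonneg _
        nlinarith [norm_nonneg (ψ sv), abs_nonneg (ip (g r) (toE (fun i => Real.log (u i))))]
    _ = (Fintype.card {r // r ∈ rn.reactions}) * ‖ψc‖ * b * ‖sv‖ := by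
        rw [Finset.sum_const, Finset.card_univ]
        simp [mul_assoc, mul_comm, mul_left_comm]
    _ = (Fintype.card {r // r ∈ rn.reactions}) * ‖ψc‖ * b * ‖s‖ := rfl

end Aux

section Aux2

variable {N : ℕ}

set_option maxHeartbeats 1600000 in
/-- On a positive stoichiometric compatibility class, if all reaction-vector pairings with
`log x` are bounded, then `x` itself is bounded. -/
lemma coord_bound (rn : ReactionNetwork N) (xstar : Fin N → ℝ) (hxstar : ∀ i, 0 < xstar i)
    {δ : ℝ} (hδ : 0 < δ) (b : ℝ) (hb : 0 ≤ b) :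
    ∃ P : ℝ, ∀ x : Fin N → ℝ, (∀ i, δ ≤ x i) → x - xstar ∈ rn.stoichSubspace →
      (∀ r ∈ rn.reactions, |∑ i, (r.2 i - r.1 i) * Real.log (x i)| ≤ b) →
      ∀ j, x j ≤ P := by
  classical
  obtain ⟨K, hK0, hK⟩ := pairing_bound rn
  set K₂ := K * b with hK₂def
  have hK₂0 : 0 ≤ K₂ := mul_nonneg hK0 hb
  set C₂ := K₂ + |Real.log δ| with hC₂def
  have hC₂0 : 0 ≤ C₂ := by positivity
  set Xs := ∑ i, xstar i with hXsdef
  set D := (N : ℝ) * (Real.exp K₂ * C₂) + 1 with hDdef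
  have hD1 : 1 ≤ D := by
    have : (0:ℝ) ≤ (N : ℝ) * (Real.exp K₂ * C₂) := by positivity
    simp only [hDdef]; linarith
  set Wst := max 1 (K₂ + Real.log (Xs + D) + 1) with hWstdef
  refine ⟨Real.exp (K₂ + Wst), ?_⟩
  intro x hxδ hxS hxb j
  have hxpos : ∀ i, 0 < x i := fun i => lt_of_lt_of_le hδ (hxδ i)
  set u : Fin N → ℝ := fun i => Real.log (x i) with hudef
  set uE := toE u with huEdef
  set p : EuclideanSpace ℝ (Fin N) :=
    (((stoichE rn).orthogonalProjectionOnto uE : stoichE rn) : EuclideanSpace ℝ (Fin N)) with hpdef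
  have hpmem : p ∈ stoichE rn := SetLike.coe_mem _
  set w := uE - p with hwdef
  have hw : w ∈ (stoichE rn)ᗮ := Submodule.sub_starProjection_mem_orthogonal (K := stoichE rn) uE
  have hpu : ip p uE = ‖p‖^2 := by
    have h0 : ip p w = 0 := by
      have := (Submodule.mem_orthogonal (stoichE rn) w).1 hw p hpmem
      simpa [ip] using this
    have huE' : uE = p + w := by rw [hwdef]; abel
    have : ip p uE = ip p p + ip p w := by
      rw [ip, ip, ip, huE']
      exact inner_add_right p p w
    rw [this, h0, ip, real_inner_self_eq_norm_sq]
    ring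
  have hpnorm : ‖p‖ ≤ K₂ := by
    have h1 := hK x b hb hxb p hpmem
    have h2 : ip p (toE fun i => Real.log (x i)) = ‖p‖^2 := hpu
    rw [h2] at h1
    have h3 : |‖p‖^2| = ‖p‖^2 := abs_of_nonneg (sq_nonneg _)
    rw [h3] at h1
    nlinarith [norm_nonneg p]
  have hxsE : toE (x - xstar) ∈ stoichE rn := mem_stoichE hxS
  have horth : ip (toE (x - xstar)) w = 0 := by
    have := (Submodule.mem_orthogonal (stoichE rn) w).1 hw _ hxsE
    simpa [ip] using this
  have hsum : ∑ i, (x i - xstar i) * w i = 0 := by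
    have h1 : ip (toE (x - xstar)) (toE (fun i => w i)) = ∑ i, (x - xstar) i * w i :=
      inner_toE _ _
    have h2 : toE (fun i => w i) = w := rfl
    rw [h2, horth] at h1
    have h3 : ∀ i, (x - xstar) i = x i - xstar i := fun i => rfl
    simp only [h3] at h1
    exact h1.symm
  have hpc : ∀ i, |p i| ≤ K₂ := fun i => le_trans (coord_le_norm p i) hpnorm
  have huc : ∀ i, u i = p i + w i := by
    intro i
    have : w i = uE i - p i := PiLp.sub_apply _ uE p i
    have huEi : uE i = u i := rfl
    rw [huEi] at this
    linarith
  have hwlb : ∀ i, -(C₂) ≤ w i := by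
    intro i
    have h1 : Real.log δ ≤ u i := Real.log_le_log hδ (hxδ i)
    have h2 := hpc i
    have h3 := huc i
    have h4 : -|Real.log δ| ≤ Real.log δ := neg_abs_le _
    have h5 : p i ≤ K₂ := le_trans (le_abs_self _) h2
    simp only [hC₂def]
    linarith
  obtain ⟨istar, -, histar⟩ :=
    Finset.exists_max_image Finset.univ (fun i => w i) ⟨j, Finset.mem_univ j⟩
  set W := w istar with hWdef
  have hwleW : ∀ i, w i ≤ W := fun i => histar i (Finset.mem_univ i)
  have hxiW : Real.exp (W - K₂) ≤ x istar := by
    have h1 : x istar = Real.exp (u istar) := (Real.exp_log (hxpos istar)).symm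
    rw [h1]
    apply Real.exp_le_exp.2
    have h2 := huc istar
    have h3 : -K₂ ≤ p istar := by
      have := hpc istar
      have := neg_abs_le (p istar)
      linarith
    linarith
  have hWle : W ≤ Wst := by
    by_contra hW
    push_neg at hW
    have hW1 : 1 < W := lt_of_le_of_lt (le_max_left _ _) hW
    set E := Real.exp K₂ * C₂ with hEdef
    have hE0 : 0 ≤ E := by positivity
    have hterm : ∀ i ∈ Finset.univ.erase istar, -(E) ≤ x i * w i := by
      intro i _
      rcases le_or_gt 0 (w i) with h | h
      · have h1 : 0 ≤ x i * w i := mul_nonneg (le_of_lt (hxpos i)) h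
        linarith
      · have hxle : x i ≤ Real.exp K₂ := by
          have h1 : x i = Real.exp (u i) := (Real.exp_log (hxpos i)).symm
          rw [h1]
          apply Real.exp_le_exp.2
          have h2 := huc i
          have h3 : p i ≤ K₂ := le_trans (le_abs_self _) (hpc i)
          linarith
        have h1 : Real.exp K₂ * w i ≤ x i * w i :=
          mul_le_mul_of_nonpos_right hxle (le_of_lt h)
        have h2 : Real.exp K₂ * (-(C₂)) ≤ Real.exp K₂ * w i :=
          mul_le_mul_of_nonneg_left (hwlb i) (le_of_lt (Real.exp_pos _))
        have h3 : Real.exp K₂ * (-(C₂)) = -(E) := by rw [hEdef]; ring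
        linarith
    have hsplit : ∑ i ∈ Finset.univ.erase istar, (x i * w i) + x istar * W
        = ∑ i, x i * w i := Finset.sum_erase_add _ _ (Finset.mem_univ istar)
    have hcard : ((Finset.univ.erase istar).card : ℝ) ≤ (N : ℝ) := by
      have h1 : (Finset.univ.erase istar).card ≤ Fintype.card (Fin N) :=
        Finset.card_le_card (Finset.erase_subset _ _) |>.trans (by simp)
      have h2 : Fintype.card (Fin N) = N := Fintype.card_fin N
      exact_mod_cast h1.trans_eq h2
    have hlow : x istar * W - (N : ℝ) * E ≤ ∑ i, x i * w i := by
      have h1 : ∑ i ∈ Finset.univ.erase istar, (-(E)) ≤ ∑ i ∈ Finset.univ.erase istar, (x i * w i) :=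
        Finset.sum_le_sum hterm
      have h2 : ∑ i ∈ Finset.univ.erase istar, (-(E)) = ((Finset.univ.erase istar).card : ℝ) * (-(E)) := by
        rw [Finset.sum_const, nsmul_eq_mul]
      have h3 : -((N:ℝ) * E) ≤ ((Finset.univ.erase istar).card : ℝ) * (-(E)) := by
        have := mul_le_mul_of_nonneg_right hcard hE0
        nlinarith
      linarith
    have hup : ∑ i, x i * w i ≤ Xs * W := by
      have h1 : ∑ i, x i * w i = ∑ i, xstar i * w i := by
        have h2 : ∑ i, (x i - xstar i) * w i
            = ∑ i, x i * w i - ∑ i, xstar i * w i := by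
          rw [← Finset.sum_sub_distrib]
          exact Finset.sum_congr rfl fun i _ => by ring
        rw [hsum] at h2
        linarith
      rw [h1]
      calc ∑ i, xstar i * w i ≤ ∑ i, xstar i * W :=
            Finset.sum_le_sum fun i _ =>
              mul_le_mul_of_nonneg_left (hwleW i) (le_of_lt (hxstar i))
        _ = Xs * W := by rw [← Finset.sum_mul]
    have hXsD : 0 < Xs + D := by
      have h1 : 0 ≤ Xs := Finset.sum_nonneg fun i _ => le_of_lt (hxstar i)
      linarith
    have hgrow : Xs + D < Real.exp (W - K₂) := by
      have h1 : K₂ + Real.log (Xs + D) + 1 < W := lt_of_le_of_lt (le_max_right _ _) hW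
      calc Xs + D = Real.exp (Real.log (Xs + D)) := (Real.exp_log hXsD).symm
        _ < Real.exp (W - K₂) := by apply Real.exp_lt_exp.2; linarith
    -- combine everything into a contradiction
    have hfin1 : Real.exp (W - K₂) * W ≤ x istar * W :=
      mul_le_mul_of_nonneg_right hxiW (by linarith)
    have hfin2 : x istar * W ≤ Xs * W + (N : ℝ) * E := by linarith
    have hfin3 : Xs * W < (Real.exp (W - K₂) - D) * W := by
      have : Xs < Real.exp (W - K₂) - D := by linarith
      exact mul_lt_mul_of_pos_right this (by linarith)
    have hfin4 : (Real.exp (W - K₂) - D) * W = Real.exp (W - K₂) * W - D * W := by ring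
    have hfin5 : D ≤ D * W := by nlinarith
    have hND : (N : ℝ) * E = D - 1 := by rw [hDdef]; ring
    linarith
  have hujb : u j ≤ K₂ + Wst := by
    have h1 := huc j
    have h2 : p j ≤ K₂ := le_trans (le_abs_self _) (hpc j)
    have h3 : w j ≤ Wst := le_trans (hwleW j) hWle
    linarith
  calc x j = Real.exp (u j) := (Real.exp_log (hxpos j)).symm
    _ ≤ Real.exp (K₂ + Wst) := Real.exp_le_exp.2 hujb

end Aux2

section Aux3

variable {N : ℕ}

/-- The instantaneous "drift" of the Lyapunov function `∑ (xᵢ log xᵢ - xᵢ)`. -/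
noncomputable def drift (rn : ReactionNetwork N) (x : Fin N → ℝ)
    (k : ((Fin N → ℝ) × (Fin N → ℝ)) → ℝ) : ℝ :=
  ∑ r ∈ rn.reactions, k r * vpow x r.1 * (theta x r.2 - theta x r.1)

lemma exists_exit (rn : ReactionNetwork N) (T1 : Finset (Fin N → ℝ)) {a b : Fin N → ℝ}
    (h : rn.DirReach a b) (ha : a ∈ T1) :
    b ∉ T1 → ∃ r ∈ rn.reactions, r.1 ∈ T1 ∧ r.2 ∉ T1 := by
  classical
  induction h with
  | refl => exact fun hb => absurd ha hb
  | @tail p q hap hpq ih =>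
      intro hq
      by_cases hpT : p ∈ T1
      · exact ⟨(p, q), hpq, hpT, hq⟩
      · exact ih hpT

lemma ultra_exists {α : Type*} (U : Ultrafilter ℕ) (s : Finset α) (a : ℕ → α)
    (h : ∀ n, a n ∈ s) : ∃ y ∈ s, {n | a n = y} ∈ U := by
  classical
  have hmem : {n | a n ∈ s} ∈ U := by
    have : {n | a n ∈ s} = Set.univ := Set.eq_univ_of_forall h
    rw [this]; exact Filter.univ_mem
  -- general statement by induction on the finset
  have main : ∀ (t : Finset α), {n | a n ∈ t} ∈ U → ∃ y ∈ t, {n | a n = y} ∈ U := by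
    intro t
    induction t using Finset.induction with
    | empty => intro ht; simpa using Filter.nonempty_of_mem ht
    | @insert y s hy ih =>
        intro ht
        have hsplit : {n | a n ∈ insert y s} = {n | a n = y} ∪ {n | a n ∈ s} := by
          ext n; simp [Finset.mem_insert]
        rw [hsplit, Ultrafilter.union_mem_iff] at ht
        rcases ht with h1 | h2
        · exact ⟨y, Finset.mem_insert_self _ _, h1⟩
        · obtain ⟨z, hz, hz2⟩ := ih h2
          exact ⟨z, Finset.mem_insert_of_mem hz, hz2⟩
  exact main s hmem

lemma ultra_lim (U : Ultrafilter ℕ) (f : ℕ → EReal) :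
    ∃ L : EReal, Filter.Tendsto f U (nhds L) :=
  ⟨(U.map f).lim, Ultrafilter.le_nhds_lim _⟩

lemma tendsto_coe_bound {g : ℕ → ℝ} {l : Filter ℕ} {L : EReal}
    (h : Filter.Tendsto (fun n => ((g n : ℝ) : EReal)) l (nhds L)) (hL : L ≠ ⊤) :
    ∃ c : ℝ, ∀ᶠ n in l, g n ≤ c := by
  obtain ⟨c, hc⟩ : ∃ c : ℝ, L < (c : EReal) := by
    induction L with
    | bot => exact ⟨0, by simp⟩
    | coe r => exact ⟨r + 1, by exact_mod_cast lt_add_one r⟩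
    | top => exact absurd rfl hL
  refine ⟨c, (h.eventually_lt_const hc).mono fun n hn => ?_⟩
  exact le_of_lt (by exact_mod_cast hn)

lemma tendsto_coe_top {g : ℕ → ℝ} {l : Filter ℕ}
    (h : Filter.Tendsto (fun n => ((g n : ℝ) : EReal)) l (nhds ⊤)) :
    Filter.Tendsto g l Filter.atTop := by
  rw [EReal.tendsto_nhds_top_iff_real] at h
  refine Filter.tendsto_atTop.2 fun b => (h b).mono fun n hn => ?_
  exact le_of_lt (by exact_mod_cast hn)

lemma term_le {η k : ℝ} (hη : 0 < η) (hk1 : η ≤ k) (hk2 : k ≤ 1 / η) (t1 t2 ts : ℝ)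
    (h1 : t2 ≤ ts) : k * Real.exp t1 * (t2 - t1) ≤ (1 / η) * Real.exp ts := by
  have hk0 : 0 ≤ k := le_trans hη.le hk1
  rcases le_or_gt (t2 - t1) 0 with h | h
  · have h2 : k * Real.exp t1 * (t2 - t1) ≤ 0 :=
      mul_nonpos_of_nonneg_of_nonpos (mul_nonneg hk0 (Real.exp_pos t1).le) h
    have h3 : (0:ℝ) ≤ (1 / η) * Real.exp ts := by positivity
    linarith
  · have h2 : Real.exp t1 * (t2 - t1) ≤ Real.exp t2 := exp_mul_sub_le _ _
    have h3 : Real.exp t2 ≤ Real.exp ts := Real.exp_le_exp.2 h1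
    have h4 : 0 ≤ Real.exp t1 * (t2 - t1) := mul_nonneg (Real.exp_pos t1).le h.le
    calc k * Real.exp t1 * (t2 - t1) = k * (Real.exp t1 * (t2 - t1)) := by ring
      _ ≤ (1 / η) * Real.exp ts :=
          mul_le_mul hk2 (h2.trans h3) h4 (by positivity)

lemma term_le_neg {η k : ℝ} (hη : 0 < η) (hk1 : η ≤ k) {t1 t2 L0 d : ℝ}
    (hd : t2 - t1 ≤ d) (hd0 : d ≤ 0) (h1 : L0 ≤ t1) :
    k * Real.exp t1 * (t2 - t1) ≤ η * Real.exp L0 * d := by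
  have h2 : η * Real.exp L0 ≤ k * Real.exp t1 := by
    have := Real.exp_le_exp.2 h1
    have := Real.exp_pos L0
    nlinarith
  have h3 : 0 < η * Real.exp L0 := by positivity
  have hd' : t2 - t1 ≤ 0 := hd.trans hd0
  calc k * Real.exp t1 * (t2 - t1) ≤ η * Real.exp L0 * (t2 - t1) := by nlinarith
    _ ≤ η * Real.exp L0 * d := by nlinarith

end Aux3

section Key

variable {N : ℕ}

set_option maxHeartbeats 2000000 in
/-- **Key estimate**: for a weakly reversible single-linkage-class network, far out on a
positive stoichiometric compatibility class (with coordinates bounded below), the drift of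
the Lyapunov function is uniformly very negative. -/
lemma key_drift (rn : ReactionNetwork N) (hwr : rn.WeaklyReversible)
    (hsingle : rn.SingleLinkageClass) {η δ : ℝ} (hη : 0 < η) (hδ : 0 < δ)
    (xstar : Fin N → ℝ) (hxstar : ∀ i, 0 < xstar i) (M : ℝ) :
    ∃ R : ℝ, ∀ (x : Fin N → ℝ) (k : ((Fin N → ℝ) × (Fin N → ℝ)) → ℝ),
      (∀ i, δ ≤ x i) → (x - xstar ∈ rn.stoichSubspace) → (∃ i, R ≤ x i) →
      (∀ r ∈ rn.reactions, η ≤ k r ∧ k r ≤ 1 / η) →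
      drift rn x k ≤ -M := by
  classical
  by_contra hcon
  push_neg at hcon
  have hcon' : ∀ n : ℕ, ∃ (x : Fin N → ℝ) (k : ((Fin N → ℝ) × (Fin N → ℝ)) → ℝ),
      (∀ i, δ ≤ x i) ∧ (x - xstar ∈ rn.stoichSubspace) ∧ (∃ i, (n:ℝ) ≤ x i) ∧
      (∀ r ∈ rn.reactions, η ≤ k r ∧ k r ≤ 1 / η) ∧ -M < drift rn x k := by
    intro n
    obtain ⟨x, k, h1, h2, h3, h4, h5⟩ := hcon (n : ℝ)
    exact ⟨x, k, h1, h2, h3, h4, h5⟩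
  choose xx kk hxδ hxS hxbig hkb hdrift using hcon'
  set U := Ultrafilter.of (Filter.atTop : Filter ℕ) with hUdef
  have hUle : (U : Filter ℕ) ≤ Filter.atTop := Ultrafilter.of_le _
  set θf : ℕ → (Fin N → ℝ) → ℝ := fun n y => theta (xx n) y with hθfdef
  have hxpos : ∀ n i, 0 < xx n i := fun n i => lt_of_lt_of_le hδ (hxδ n i)
  -- bound on the size of complexes
  obtain ⟨A, hA0, hA⟩ : ∃ A : ℝ, 0 ≤ A ∧ ∀ y ∈ rn.complexes, ∑ i, y i ≤ A := by
    refine ⟨∑ y ∈ rn.complexes, ∑ i, |y i|, Finset.sum_nonneg fun y _ =>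
      Finset.sum_nonneg fun i _ => abs_nonneg _, fun y hy => ?_⟩
    calc ∑ i, y i ≤ ∑ i, |y i| := Finset.sum_le_sum fun i _ => le_abs_self _
      _ ≤ ∑ y ∈ rn.complexes, ∑ i, |y i| :=
          Finset.single_le_sum (f := fun z => ∑ i, |z i|)
            (fun z _ => Finset.sum_nonneg fun i _ => abs_nonneg _) hy
  set C₀ := A * |Real.log δ| with hC₀def
  have hC₀0 : 0 ≤ C₀ := by positivity
  have hynn : ∀ y ∈ rn.complexes, ∀ i, 0 ≤ y i := by
    intro y hy i
    obtain ⟨m, hm⟩ := rn.complexes_nonneg_int y hy i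
    rw [hm]; positivity
  have hθlb : ∀ n, ∀ y ∈ rn.complexes, -C₀ ≤ θf n y := by
    intro n y hy
    have h1 : ∀ i, y i * (-(|Real.log δ|)) ≤ y i * Real.log (xx n i) := by
      intro i
      apply mul_le_mul_of_nonneg_left _ (hynn y hy i)
      have h2 : Real.log δ ≤ Real.log (xx n i) := Real.log_le_log hδ (hxδ n i)
      have h3 := neg_abs_le (Real.log δ)
      linarith
    have h4 : ∑ i, y i * (-(|Real.log δ|)) ≤ θf n y := Finset.sum_le_sum fun i _ => h1 i
    have h5 : ∑ i, y i * (-(|Real.log δ|)) = (∑ i, y i) * (-(|Real.log δ|)) := by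
      rw [Finset.sum_mul]
    have h6 : A * (-(|Real.log δ|)) ≤ (∑ i, y i) * (-(|Real.log δ|)) := by
      apply mul_le_mul_of_nonpos_right (hA y hy)
      simp [abs_nonneg]
    have h7 : A * (-(|Real.log δ|)) = -C₀ := by rw [hC₀def]; ring
    linarith
  -- reaction pairings must blow up along U
  have hBbig : ∀ b : ℝ, 0 ≤ b →
      {n | ∃ r ∈ rn.reactions, b < |θf n r.2 - θf n r.1|} ∈ U := by
    intro b hb
    obtain ⟨P, hP⟩ := coord_bound rn xstar hxstar hδ b hb
    by_contra hnot
    rw [← Ultrafilter.compl_mem_iff_notMem] at hnot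
    have hsub : {n | ∃ r ∈ rn.reactions, b < |θf n r.2 - θf n r.1|}ᶜ ⊆
        {n : ℕ | (n : ℝ) ≤ P} := by
      intro n hn
      simp only [Set.mem_compl_iff, Set.mem_setOf_eq, not_exists, not_lt] at hn
      push_neg at hn
      have hP' : ∀ j, xx n j ≤ P := by
        apply hP (xx n) (hxδ n) (hxS n)
        intro r hr
        have := hn r hr
        rw [← theta_sub]
        exact this
      obtain ⟨i, hi⟩ := hxbig n
      exact le_trans hi (hP' i)
    have h1 : {n : ℕ | (n : ℝ) ≤ P} ∈ U := Filter.mem_of_superset hnot hsub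
    have h2 : {n : ℕ | P < (n : ℝ)} ∈ U := by
      apply hUle
      have : ∀ᶠ n : ℕ in Filter.atTop, P < (n : ℝ) :=
        Filter.Tendsto.eventually_gt_atTop tendsto_natCast_atTop_atTop P
      exact this
    obtain ⟨n, hn1, hn2⟩ := Filter.nonempty_of_mem (Filter.inter_mem h1 h2)
    simp only [Set.mem_setOf_eq] at hn1 hn2
    exact absurd hn2 (not_lt.2 hn1)
  -- complexes are nonempty
  have hCne : rn.complexes.Nonempty := by
    obtain ⟨n, r, hr, -⟩ := Filter.nonempty_of_mem (hBbig 0 le_rfl)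
    exact ⟨r.1, rn.source_mem r hr⟩
  -- the maximizing complex along U
  choose astar hastar_mem hastar using fun n => Finset.exists_max_image rn.complexes (θf n) hCne
  obtain ⟨ystar, hystar_mem, hystarU⟩ := ultra_exists U rn.complexes astar hastar_mem
  have hstar : ∀ᶠ n in (U : Filter ℕ), ∀ y ∈ rn.complexes, θf n y ≤ θf n ystar := by
    have h1 : ∀ᶠ n in (U : Filter ℕ), astar n = ystar := hystarU
    filter_upwards [h1] with n hn
    intro y hy
    rw [← hn]
    exact hastar n y hy
  -- θ* → ∞ along U
  have hθtop : Filter.Tendsto (fun n => θf n ystar) (U : Filter ℕ) Filter.atTop := by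
    refine Filter.tendsto_atTop.2 fun b => ?_
    filter_upwards [hBbig (max 0 (b + C₀)) (le_max_left _ _), hstar] with n hn hstarn
    obtain ⟨r, hr, hrb⟩ := hn
    have h1 : -C₀ ≤ θf n r.1 := hθlb n r.1 (rn.source_mem r hr)
    have h2 : -C₀ ≤ θf n r.2 := hθlb n r.2 (rn.target_mem r hr)
    have h3 : θf n r.1 ≤ θf n ystar := hstarn r.1 (rn.source_mem r hr)
    have h4 : θf n r.2 ≤ θf n ystar := hstarn r.2 (rn.target_mem r hr)
    have h5 : |θf n r.2 - θf n r.1| ≤ θf n ystar + C₀ := abs_le.2 ⟨by linarith, by linarith⟩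
    have h6 : max 0 (b + C₀) < θf n ystar + C₀ := lt_of_lt_of_le hrb h5
    have h7 : b + C₀ ≤ max 0 (b + C₀) := le_max_right _ _
    linarith
  -- limits of gaps along U
  choose Λ hΛ using fun y : Fin N → ℝ =>
    ultra_lim U (fun n => ((θf n ystar - θf n y : ℝ) : EReal))
  set T1 : Finset (Fin N → ℝ) := rn.complexes.filter (fun y => Λ y ≠ ⊤) with hT1def
  have hystarT1 : ystar ∈ T1 := by
    have h1 : Λ ystar = ((0:ℝ) : EReal) := by
      apply tendsto_nhds_unique (hΛ ystar)
      have : (fun n => ((θf n ystar - θf n ystar : ℝ) : EReal)) = fun _ => ((0:ℝ) : EReal) := by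
        funext n; norm_num
      rw [this]
      exact tendsto_const_nhds
    rw [hT1def, Finset.mem_filter]
    exact ⟨hystar_mem, by rw [h1]; exact fun h => by simp at h⟩
  have hT1bound : ∃ c : ℝ, 0 ≤ c ∧
      ∀ᶠ n in (U : Filter ℕ), ∀ y ∈ T1, θf n ystar - θf n y ≤ c := by
    have h1 : ∀ y ∈ T1, ∃ c, ∀ᶠ n in (U : Filter ℕ), θf n ystar - θf n y ≤ c := by
      intro y hy
      exact tendsto_coe_bound (hΛ y) ((Finset.mem_filter.1 hy).2)
    choose! cf hcf using h1
    have hT1ne : T1.Nonempty := ⟨ystar, hystarT1⟩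
    refine ⟨max 0 (T1.sup' hT1ne cf), le_max_left _ _, ?_⟩
    rw [Finset.eventually_all]
    intro y hy
    filter_upwards [hcf y hy] with n hn
    exact hn.trans ((Finset.le_sup' cf hy).trans (le_max_right _ _))
  obtain ⟨c, hc0, hcbound⟩ := hT1bound
  -- there is a complex outside T1
  have hnotT1 : ∃ z ∈ rn.complexes, z ∉ T1 := by
    by_contra hall
    push_neg at hall
    have hBc := hBbig (2 * c) (by linarith)
    have : ∀ᶠ n in (U : Filter ℕ),
        (∃ r ∈ rn.reactions, 2 * c < |θf n r.2 - θf n r.1|) := hBc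
    obtain ⟨n, hn1, hn2, hn3⟩ :=
      Filter.nonempty_of_mem (Filter.inter_mem this (Filter.inter_mem hcbound hstar))
    obtain ⟨r, hr, hrb⟩ := hn1
    have h1 : θf n ystar - θf n r.1 ≤ c := hn2 r.1 (hall r.1 (rn.source_mem r hr))
    have h2 : θf n ystar - θf n r.2 ≤ c := hn2 r.2 (hall r.2 (rn.target_mem r hr))
    have h3 : θf n r.1 ≤ θf n ystar := hn3 r.1 (rn.source_mem r hr)
    have h4 : θf n r.2 ≤ θf n ystar := hn3 r.2 (rn.target_mem r hr)
    have h5 : |θf n r.2 - θf n r.1| ≤ 2 * c := abs_le.2 ⟨by linarith, by linarith⟩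
    linarith
  obtain ⟨z0, hz0C, hz0⟩ := hnotT1
  -- exit reaction from T1
  have hreach : rn.DirReach ystar z0 :=
    hwr ystar hystar_mem z0 hz0C (hsingle ystar hystar_mem z0 hz0C)
  obtain ⟨r0, hr0R, hr0a, hr0b⟩ := exists_exit rn T1 hreach hystarT1 hz0
  have hΛtop : Λ r0.2 = ⊤ := by
    by_contra hne
    exact hr0b (Finset.mem_filter.2 ⟨rn.target_mem r0 hr0R, hne⟩)
  have hGtop : Filter.Tendsto (fun n => θf n ystar - θf n r0.2) (U : Filter ℕ)
      Filter.atTop := by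
    apply tendsto_coe_top
    rw [← hΛtop]
    exact hΛ r0.2
  -- assemble the contradiction
  obtain ⟨CR, hCRdef⟩ : ∃ CR : ℝ, CR = (rn.reactions.card : ℝ) := ⟨_, rfl⟩
  have hCR0 : 0 ≤ CR := by rw [hCRdef]; positivity
  obtain ⟨G, hGdef⟩ : ∃ G : ℝ, G = c + (CR * (1 / η) * Real.exp c + 1) / η := ⟨_, rfl⟩
  have hGc : c ≤ G := by
    have h1 : 0 ≤ (CR * (1 / η) * Real.exp c + 1) / η := by positivity
    rw [hGdef]; linarith
  have hev1 : ∀ᶠ n in (U : Filter ℕ), G ≤ θf n ystar - θf n r0.2 :=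
    hGtop.eventually_ge_atTop G
  have hev2 : ∀ᶠ n in (U : Filter ℕ), c + Real.log (|M| + 1) ≤ θf n ystar :=
    hθtop.eventually_ge_atTop _
  obtain ⟨n, hn1, hn2, hn3, hn4⟩ :=
    Filter.nonempty_of_mem (Filter.inter_mem hstar
      (Filter.inter_mem hcbound (Filter.inter_mem hev1 hev2)))
  simp only [Set.mem_setOf_eq] at hn1 hn2 hn3 hn4
  -- now a pure computation at index n
  have hdr : drift rn (xx n) (kk n)
      = ∑ r ∈ rn.reactions, kk n r * Real.exp (θf n r.1) * (θf n r.2 - θf n r.1) := by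
    apply Finset.sum_congr rfl
    intro r hr
    rw [vpow_eq_exp_s9 r.1 (hxpos n)]
  have hsplit : ∑ r ∈ rn.reactions.erase r0,
        (kk n r * Real.exp (θf n r.1) * (θf n r.2 - θf n r.1))
      + kk n r0 * Real.exp (θf n r0.1) * (θf n r0.2 - θf n r0.1)
      = ∑ r ∈ rn.reactions, kk n r * Real.exp (θf n r.1) * (θf n r.2 - θf n r.1) :=
    Finset.sum_erase_add _ _ hr0R
  have hterm : ∀ r ∈ rn.reactions.erase r0,
      kk n r * Real.exp (θf n r.1) * (θf n r.2 - θf n r.1)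
        ≤ (1 / η) * Real.exp (θf n ystar) := by
    intro r hr
    have hrR := Finset.mem_of_mem_erase hr
    exact term_le hη (hkb n r hrR).1 (hkb n r hrR).2 _ _ _
      (hn1 r.2 (rn.target_mem r hrR))
  have hsum1 : ∑ r ∈ rn.reactions.erase r0,
        (kk n r * Real.exp (θf n r.1) * (θf n r.2 - θf n r.1))
      ≤ CR * ((1 / η) * Real.exp (θf n ystar)) := by
    have h1 := Finset.sum_le_card_nsmul _ _ _ hterm
    have h2 : ((rn.reactions.erase r0).card : ℝ) ≤ CR := by
      rw [hCRdef]
      exact_mod_cast Finset.card_le_card (Finset.erase_subset _ _)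
    rw [nsmul_eq_mul] at h1
    have h3 : 0 ≤ (1 / η) * Real.exp (θf n ystar) := by positivity
    nlinarith
  have hneg : kk n r0 * Real.exp (θf n r0.1) * (θf n r0.2 - θf n r0.1)
      ≤ η * Real.exp (θf n ystar - c) * (c - G) := by
    apply term_le_neg hη (hkb n r0 hr0R).1
    · -- θf n r0.2 - θf n r0.1 ≤ c - G
      have h1 : θf n r0.2 ≤ θf n ystar - G := by linarith [hn3]
      have h2 : θf n ystar - θf n r0.1 ≤ c := hn2 r0.1 hr0a
      linarith
    · linarith
    · have h2 : θf n ystar - θf n r0.1 ≤ c := hn2 r0.1 hr0a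
      linarith
  have hexp : Real.exp (θf n ystar) = Real.exp (θf n ystar - c) * Real.exp c := by
    rw [← Real.exp_add]; ring_nf
  have hcG : η * Real.exp (θf n ystar - c) * (c - G)
      = -(Real.exp (θf n ystar - c) * (CR * (1 / η) * Real.exp c + 1)) := by
    rw [hGdef]
    field_simp
    ring
  have htotal : drift rn (xx n) (kk n) ≤ -(Real.exp (θf n ystar - c)) := by
    rw [hdr, ← hsplit]
    have h1 : CR * ((1 / η) * Real.exp (θf n ystar))
        + η * Real.exp (θf n ystar - c) * (c - G) = -(Real.exp (θf n ystar - c)) := by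
      rw [hcG, hexp]; ring
    linarith [hsum1, hneg]
  have hbig : |M| + 1 ≤ Real.exp (θf n ystar - c) := by
    have h1 : Real.log (|M| + 1) ≤ θf n ystar - c := by linarith [hn4]
    calc |M| + 1 = Real.exp (Real.log (|M| + 1)) := (Real.exp_log (by positivity)).symm
      _ ≤ Real.exp (θf n ystar - c) := Real.exp_le_exp.2 h1
  have hfinal := hdrift n
  have hM : M ≤ |M| := le_abs_self M
  linarith

end Key

section Lyap

variable {N : ℕ}

/-- The Lyapunov function `V(x) = ∑ i, (xᵢ log xᵢ - xᵢ)`. -/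
noncomputable def lyap (x : Fin N → ℝ) : ℝ := ∑ i, (x i * Real.log (x i) - x i)

lemma term_lb {u : ℝ} (hu : 0 < u) : -1 ≤ u * Real.log u - u := by
  have h1 : Real.log u⁻¹ ≤ u⁻¹ - 1 := Real.log_le_sub_one_of_pos (by positivity)
  rw [Real.log_inv] at h1
  have h2 : u * (-Real.log u) ≤ u * (u⁻¹ - 1) := by
    apply mul_le_mul_of_nonneg_left h1 hu.le
  have h3 : u * (u⁻¹ - 1) = 1 - u := by field_simp
  nlinarith

lemma lyap_lb {x : Fin N → ℝ} (hx : ∀ i, 0 < x i) : -(N : ℝ) ≤ lyap x := by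
  have h1 : ∑ _i : Fin N, (-1 : ℝ) ≤ lyap x :=
    Finset.sum_le_sum fun i _ => term_lb (hx i)
  have h2 : ∑ _i : Fin N, (-1 : ℝ) = -(N : ℝ) := by simp
  linarith

lemma term_ub {u R : ℝ} (hu : 0 < u) (huR : u ≤ R) (hR : 1 ≤ R) :
    u * Real.log u - u ≤ R * |Real.log R| := by
  have hRpos : (0:ℝ) < R := lt_of_lt_of_le one_pos hR
  rcases le_or_gt u 1 with h | h
  · have h1 : Real.log u ≤ 0 := Real.log_nonpos hu.le h
    have h2 : u * Real.log u ≤ 0 := mul_nonpos_of_nonneg_of_nonpos hu.le h1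
    have h3 : (0:ℝ) ≤ R * |Real.log R| := by positivity
    linarith
  · have h1 : 0 ≤ Real.log u := Real.log_nonneg h.le
    have h2 : Real.log u ≤ |Real.log R| := by
      have := Real.log_le_log (by linarith) huR
      exact this.trans (le_abs_self _)
    have h3 : u * Real.log u ≤ R * |Real.log R| :=
      mul_le_mul huR h2 h1 hRpos.le
    linarith

lemma lyap_ub {x : Fin N → ℝ} {R : ℝ} (hx : ∀ i, 0 < x i) (hxR : ∀ i, x i ≤ R)
    (hR : 1 ≤ R) : lyap x ≤ (N : ℝ) * (R * |Real.log R|) := by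
  have h1 : lyap x ≤ ∑ _i : Fin N, R * |Real.log R| :=
    Finset.sum_le_sum fun i _ => term_ub (hx i) (hxR i) hR
  have h2 : ∑ _i : Fin N, R * |Real.log R| = (N : ℝ) * (R * |Real.log R|) := by
    rw [Finset.sum_const]
    simp [nsmul_eq_mul]
  linarith

lemma coord_from_lyap {x : Fin N → ℝ} {B : ℝ} (hx : ∀ i, 0 < x i)
    (hV : lyap x ≤ B) (j : Fin N) : x j ≤ max (Real.exp 2) (B + N) := by
  classical
  by_contra hbig
  push_neg at hbig
  have h1 : Real.exp 2 < x j := lt_of_le_of_lt (le_max_left _ _) hbig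
  have h2 : B + N < x j := lt_of_le_of_lt (le_max_right _ _) hbig
  have hterm : x j ≤ x j * Real.log (x j) - x j := by
    have h3 : (2:ℝ) < Real.log (x j) := by
      have := Real.log_lt_log (Real.exp_pos 2) h1
      rwa [Real.log_exp] at this
    nlinarith [hx j]
  have hsplit : ∑ i ∈ Finset.univ.erase j, (x i * Real.log (x i) - x i)
      + (x j * Real.log (x j) - x j) = lyap x :=
    Finset.sum_erase_add _ _ (Finset.mem_univ j)
  have herase : -(N:ℝ) ≤ ∑ i ∈ Finset.univ.erase j, (x i * Real.log (x i) - x i) := by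
    have h4 : ∑ _i ∈ Finset.univ.erase j, (-1 : ℝ)
        ≤ ∑ i ∈ Finset.univ.erase j, (x i * Real.log (x i) - x i) :=
      Finset.sum_le_sum fun i _ => term_lb (hx i)
    have h5 : ∑ _i ∈ Finset.univ.erase j, (-1 : ℝ)
        = -((Finset.univ.erase j).card : ℝ) := by
      rw [Finset.sum_const, nsmul_eq_mul]; ring
    have h6 : ((Finset.univ.erase j).card : ℝ) ≤ (N : ℝ) := by
      have := Finset.card_le_card (Finset.erase_subset j (Finset.univ : Finset (Fin N)))
      have h7 : (Finset.univ : Finset (Fin N)).card = N := by simp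
      exact_mod_cast this.trans_eq h7
    linarith
  linarith

lemma sum_log_field (rn : ReactionNetwork N) (x : Fin N → ℝ)
    (k : ((Fin N → ℝ) × (Fin N → ℝ)) → ℝ) :
    ∑ i, Real.log (x i) * (∑ r ∈ rn.reactions, (k r * vpow x r.1) • (r.2 - r.1)) i
      = drift rn x k := by
  have h1 : ∀ i, (∑ r ∈ rn.reactions, (k r * vpow x r.1) • (r.2 - r.1)) i
      = ∑ r ∈ rn.reactions, k r * vpow x r.1 * (r.2 i - r.1 i) := by
    intro i
    rw [Finset.sum_apply]
    exact Finset.sum_congr rfl fun r _ => by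
      simp [Pi.smul_apply, Pi.sub_apply, smul_eq_mul]
  calc ∑ i, Real.log (x i) * (∑ r ∈ rn.reactions, (k r * vpow x r.1) • (r.2 - r.1)) i
      = ∑ i, ∑ r ∈ rn.reactions,
          Real.log (x i) * (k r * vpow x r.1 * (r.2 i - r.1 i)) := by
        refine Finset.sum_congr rfl fun i _ => ?_
        rw [h1 i, Finset.mul_sum]
    _ = ∑ r ∈ rn.reactions, ∑ i,
          Real.log (x i) * (k r * vpow x r.1 * (r.2 i - r.1 i)) := Finset.sum_comm
    _ = drift rn x k := by
        unfold drift
        refine Finset.sum_congr rfl fun r _ => ?_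
        rw [theta, theta, ← Finset.sum_sub_distrib, Finset.mul_sum]
        exact Finset.sum_congr rfl fun i _ => by ring

lemma lyap_deriv (rn : ReactionNetwork N) {φ : ℝ → Fin N → ℝ}
    {k : ((Fin N → ℝ) × (Fin N → ℝ)) → ℝ} {t : ℝ}
    (hpos : ∀ i, 0 < φ t i)
    (hd : HasDerivWithinAt φ
      (∑ r ∈ rn.reactions, (k r * vpow (φ t) r.1) • (r.2 - r.1)) (Set.Ici 0) t) :
    HasDerivWithinAt (fun s => lyap (φ s)) (drift rn (φ t) k) (Set.Ici 0) t := by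
  set F : Fin N → ℝ := ∑ r ∈ rn.reactions, (k r * vpow (φ t) r.1) • (r.2 - r.1) with hF
  have hcomp : ∀ i : Fin N, HasDerivWithinAt (fun s => φ s i) (F i) (Set.Ici 0) t := by
    intro i
    exact (ContinuousLinearMap.proj (R := ℝ) (φ := fun _ : Fin N => ℝ) i).hasFDerivAt.comp_hasDerivWithinAt t hd
  have hterm : ∀ i : Fin N, HasDerivWithinAt (fun s => φ s i * Real.log (φ s i) - φ s i)
      (Real.log (φ t i) * F i) (Set.Ici 0) t := by
    intro i
    have h1 : HasDerivAt (fun u : ℝ => u * Real.log u - u) (Real.log (φ t i)) (φ t i) := by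
      have h2 := (Real.hasDerivAt_mul_log (ne_of_gt (hpos i))).sub (hasDerivAt_id (φ t i))
      rw [add_sub_cancel_right] at h2
      exact h2
    have h4 := h1.comp_hasDerivWithinAt t (hcomp i)
    exact h4
  have hsum := HasDerivWithinAt.fun_sum (u := (Finset.univ : Finset (Fin N)))
    (fun i _ => hterm i)
  have heq : ∑ i, Real.log (φ t i) * F i = drift rn (φ t) k := sum_log_field rn (φ t) k
  rw [heq] at hsum
  exact hsum

lemma field_mem_stoich (rn : ReactionNetwork N) (x : Fin N → ℝ)
    (k : ((Fin N → ℝ) × (Fin N → ℝ)) → ℝ) :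
    (∑ r ∈ rn.reactions, (k r * vpow x r.1) • (r.2 - r.1)) ∈ rn.stoichSubspace := by
  apply Submodule.sum_mem
  intro r hr
  apply Submodule.smul_mem
  apply Submodule.subset_span
  exact ⟨r, hr, rfl⟩

lemma traj_in_class (rn : ReactionNetwork N) {φ : ℝ → Fin N → ℝ} {Fv : ℝ → Fin N → ℝ}
    (hFS : ∀ s : ℝ, 0 ≤ s → Fv s ∈ rn.stoichSubspace)
    (hode : ∀ s : ℝ, 0 ≤ s → HasDerivWithinAt φ (Fv s) (Set.Ici 0) s)
    (t : ℝ) (ht : 0 ≤ t) : φ t - φ 0 ∈ rn.stoichSubspace := by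
  have hcont : ContinuousOn φ (Set.Icc 0 t) := by
    intro s hs
    exact ((hode s hs.1).continuousWithinAt).mono (Set.Icc_subset_Ici_self)
  have hmem : toE (φ t - φ 0) ∈ stoichE rn := by
    rw [← Submodule.orthogonal_orthogonal (stoichE rn)]
    rw [Submodule.mem_orthogonal]
    intro w hw
    -- the linear functional ⟨toE ·, w⟩
    set l : (Fin N → ℝ) →ₗ[ℝ] ℝ :=
      { toFun := fun v => ip (toE v) w
        map_add' := by
          intro a b
          simp only [ip, map_add]
          exact inner_add_left _ _ _
        map_smul' := by
          intro m a
          simp only [ip, map_smul, RingHom.id_apply]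
          exact real_inner_smul_left _ _ _ } with hl
    set lc : (Fin N → ℝ) →L[ℝ] ℝ := LinearMap.toContinuousLinearMap l with hlc
    have hlzero : ∀ s : ℝ, 0 ≤ s → lc (Fv s) = 0 := by
      intro s hs
      have h1 : toE (Fv s) ∈ stoichE rn := mem_stoichE (hFS s hs)
      have h2 := (Submodule.mem_orthogonal (stoichE rn) w).1 hw _ h1
      simpa [hlc, hl, ip] using h2
    have hconst : lc (φ t) = lc (φ 0) := by
      apply constant_of_has_deriv_right_zero (f := fun s => lc (φ s))
        (lc.continuous.comp_continuousOn hcont)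
      · intro s hs
        have h1 := (hode s hs.1).mono (Set.Ici_subset_Ici.2 hs.1)
        have h2 := lc.hasFDerivAt.comp_hasDerivWithinAt s h1
        rw [hlzero s hs.1] at h2
        exact h2
      · exact ⟨ht, le_rfl⟩
    have h3 : lc (φ t - φ 0) = 0 := by
      rw [map_sub, hconst, sub_self]
    have h4 : ip (toE (φ t - φ 0)) w = 0 := h3
    rw [ip] at h4
    rw [real_inner_comm] at h4
    exact h4
  rw [stoichE] at hmem
  obtain ⟨v, hv, hveq⟩ := hmem
  have heq : v = φ t - φ 0 := by
    have := congrArg (toE (N := N)).symm hveq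
    simpa using this
  rwa [heq] at hv

end Lyap

section MVT

lemma antitone_of_deriv_aux (f D : ℝ → ℝ)
    (hf : ∀ t : ℝ, 0 ≤ t → HasDerivWithinAt f (D t) (Set.Ici 0) t)
    {a b : ℝ} (h0a : 0 ≤ a) (hab : a ≤ b)
    (hneg : ∀ s, a < s → s < b → D s ≤ 0) : f b ≤ f a := by
  have hcont : ContinuousOn f (Set.Icc a b) := fun s hs =>
    ((hf s (le_trans h0a hs.1)).continuousWithinAt).mono
      (fun u hu => le_trans h0a hu.1)
  have hderiv : ∀ s ∈ interior (Set.Icc a b), HasDerivAt f (D s) s := by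
    intro s hs
    rw [interior_Icc] at hs
    have h0s : 0 < s := lt_of_le_of_lt h0a hs.1
    exact (hf s h0s.le).hasDerivAt (Ici_mem_nhds h0s)
  have hanti := antitoneOn_of_deriv_nonpos (convex_Icc a b) hcont
    (fun s hs => (hderiv s hs).differentiableAt.differentiableWithinAt)
    (fun s hs => by
      rw [(hderiv s hs).deriv]
      rw [interior_Icc] at hs
      exact hneg s hs.1 hs.2)
  exact hanti ⟨le_rfl, hab⟩ ⟨hab, le_rfl⟩ hab

lemma decrease_of_deriv_aux (f D : ℝ → ℝ)
    (hf : ∀ t : ℝ, 0 ≤ t → HasDerivWithinAt f (D t) (Set.Ici 0) t)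
    {a b : ℝ} (h0a : 0 ≤ a) (hab : a ≤ b)
    (hneg : ∀ s, a < s → s < b → D s ≤ -1) : f b + b ≤ f a + a := by
  have h := antitone_of_deriv_aux (fun t => f t + t) (fun t => D t + 1)
    (fun t ht => (hf t ht).add (hasDerivWithinAt_id t _))
    h0a hab (fun s hs1 hs2 => by show D s + 1 ≤ 0; linarith [hneg s hs1 hs2])
  simpa using h

end MVT

/-- **Corollary (permanence under uniform persistence).**  Let `(𝒞, ℛ)` be a weakly
reversible, single linkage class reaction network on `N` species with bounded mass-action
kinetics (`η < κ_k(t) < 1/η` for `t ≥ 0`), let `P = (x_* + S) ∩ ℝ^N_{>0}` be a positive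
stoichiometric compatibility class, and for each `x_0 ∈ P` let `φ(·, x_0)` be a
differentiable trajectory of the system starting at `x_0`.  If there is `δ > 0` with
`liminf_{t→∞} φ_i(t, x_0) > δ` for all `i` and all `x_0 ∈ P`, then there is `ρ > 0` such
that for every `x_0 ∈ P` and every `i`,
`ρ < liminf_{t→∞} φ_i(t, x_0) ≤ limsup_{t→∞} φ_i(t, x_0) < 1/ρ`. -/
theorem permanence_of_uniform_persistence
    {N : ℕ} (rn : ReactionNetwork N)
    (hwr : rn.WeaklyReversible) (hsingle : rn.SingleLinkageClass)
    (η : ℝ) (κ : ((Fin N → ℝ) × (Fin N → ℝ)) → ℝ → ℝ)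
    (hκ : rn.BoundedKinetics κ η)
    (xstar : Fin N → ℝ) (hxstar : ∀ i, 0 < xstar i)
    (Pcls : Set (Fin N → ℝ))
    (hPcls : Pcls = {x : Fin N → ℝ | (∀ i, 0 < x i) ∧ x - xstar ∈ rn.stoichSubspace})
    (φ : (Fin N → ℝ) → ℝ → Fin N → ℝ)
    (hφ0 : ∀ x₀ ∈ Pcls, φ x₀ 0 = x₀)
    (hφpos : ∀ x₀ ∈ Pcls, ∀ t : ℝ, 0 ≤ t → ∀ i, 0 < φ x₀ t i)
    (hφode : ∀ x₀ ∈ Pcls, ∀ t : ℝ, 0 ≤ t →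
      HasDerivWithinAt (φ x₀)
        (∑ r ∈ rn.reactions, (κ r t * vpow (φ x₀ t) r.1) • (r.2 - r.1))
        (Set.Ici (0 : ℝ)) t)
    (δ : ℝ) (hδ : 0 < δ)
    (hpersist : ∀ x₀ ∈ Pcls, ∀ i,
      (δ : EReal) < Filter.liminf (fun t : ℝ => ((φ x₀ t i : ℝ) : EReal)) atTop) :
    ∃ ρ : ℝ, 0 < ρ ∧ ∀ x₀ ∈ Pcls, ∀ i,
      (ρ : EReal) < Filter.liminf (fun t : ℝ => ((φ x₀ t i : ℝ) : EReal)) atTop ∧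
      Filter.limsup (fun t : ℝ => ((φ x₀ t i : ℝ) : EReal)) atTop
        < ((1 / ρ : ℝ) : EReal) := by
  classical
  obtain ⟨hη, hκb⟩ := hκ
  -- key radius for drift ≤ -1
  obtain ⟨R0, hR0⟩ := key_drift rn hwr hsingle hη hδ xstar hxstar 1
  set R₁ : ℝ := max R0 1 with hR₁def
  have hR₁1 : (1:ℝ) ≤ R₁ := le_max_right _ _
  set Vst : ℝ := (N : ℝ) * (R₁ * |Real.log R₁|) with hVstdef
  set R₂ : ℝ := max (Real.exp 2) (Vst + N) with hR₂def
  have hR₂pos : 0 < R₂ := lt_of_lt_of_le (Real.exp_pos 2) (le_max_left _ _)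
  set ρ : ℝ := min δ (1 / (R₂ + 1)) with hρdef
  have hρpos : 0 < ρ := lt_min hδ (by positivity)
  have hρδ : ρ ≤ δ := min_le_left _ _
  have hρinv : R₂ + 1 ≤ 1 / ρ := by
    have h1 : ρ ≤ 1 / (R₂ + 1) := min_le_right _ _
    have h2 : 1 / (1 / (R₂ + 1)) ≤ 1 / ρ := one_div_le_one_div_of_le hρpos h1
    rwa [one_div_one_div] at h2
  refine ⟨ρ, hρpos, ?_⟩
  intro x₀ hx₀ i
  have hx₀' : (∀ i, 0 < x₀ i) ∧ x₀ - xstar ∈ rn.stoichSubspace := by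
    rw [hPcls] at hx₀; exact hx₀
  have hpos : ∀ t : ℝ, 0 ≤ t → ∀ j, 0 < φ x₀ t j := hφpos x₀ hx₀
  have hode := hφode x₀ hx₀
  have hFS : ∀ s : ℝ, 0 ≤ s →
      (∑ r ∈ rn.reactions, (κ r s * vpow (φ x₀ s) r.1) • (r.2 - r.1)) ∈ rn.stoichSubspace :=
    fun s _ => field_mem_stoich rn (φ x₀ s) (fun r => κ r s)
  have hclass : ∀ t : ℝ, 0 ≤ t → φ x₀ t - xstar ∈ rn.stoichSubspace := by
    intro t ht
    have h1 := traj_in_class rn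
      (Fv := fun s => ∑ r ∈ rn.reactions, (κ r s * vpow (φ x₀ s) r.1) • (r.2 - r.1))
      hFS hode t ht
    have h2 : φ x₀ 0 = x₀ := hφ0 x₀ hx₀
    have h3 : φ x₀ t - xstar = (φ x₀ t - φ x₀ 0) + (x₀ - xstar) := by rw [h2]; abel
    rw [h3]
    exact Submodule.add_mem _ h1 hx₀'.2
  have hVd : ∀ t : ℝ, 0 ≤ t → HasDerivWithinAt (fun s => lyap (φ x₀ s))
      (drift rn (φ x₀ t) (fun r => κ r t)) (Set.Ici 0) t :=
    fun t ht => lyap_deriv rn (hpos t ht) (hode t ht)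
  -- eventual coordinatewise lower bound δ
  have hev : ∀ᶠ t : ℝ in atTop, ∀ j, δ < φ x₀ t j := by
    rw [Filter.eventually_all]
    intro j
    have h1 := hpersist x₀ hx₀ j
    have h2 := Filter.eventually_lt_of_lt_liminf h1
    filter_upwards [h2] with t ht
    exact_mod_cast ht
  obtain ⟨T₀', hT₀'⟩ := Filter.eventually_atTop.1 hev
  set T₀ : ℝ := max T₀' 0 with hT₀def
  have hT₀0 : (0:ℝ) ≤ T₀ := le_max_right _ _
  have hT₀ : ∀ t, T₀ ≤ t → ∀ j, δ < φ x₀ t j :=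
    fun t ht => hT₀' t (le_trans (le_max_left _ _) ht)
  -- drift is ≤ -1 when some coordinate exceeds R₁, after time T₀
  have hdrop : ∀ s, T₀ ≤ s → (∃ j, R₁ ≤ φ x₀ s j) →
      drift rn (φ x₀ s) (fun r => κ r s) ≤ -1 := by
    intro s hs hbig
    have hs0 : (0:ℝ) ≤ s := le_trans hT₀0 hs
    apply hR0 (φ x₀ s) (fun r => κ r s)
    · exact fun j => (hT₀ s hs j).le
    · exact hclass s hs0
    · obtain ⟨j, hj⟩ := hbig
      exact ⟨j, le_trans (le_max_left _ _) hj⟩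
    · intro r hr
      exact ⟨(hκb r hr s hs0).1.le, (hκb r hr s hs0).2.le⟩
  -- there is a time at which all coordinates are below R₁
  have hexists : ∃ t₁, T₀ ≤ t₁ ∧ ∀ j, φ x₀ t₁ j < R₁ := by
    by_contra hno
    push_neg at hno
    set L : ℝ := lyap (φ x₀ T₀) with hLdef
    have hLlb : -(N:ℝ) ≤ L := lyap_lb (hpos T₀ hT₀0)
    set T : ℝ := T₀ + (L + N + 1) with hTdef
    have hTT₀ : T₀ ≤ T := by rw [hTdef]; linarith
    have hd := decrease_of_deriv_aux (fun s => lyap (φ x₀ s))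
      (fun s => drift rn (φ x₀ s) (fun r => κ r s)) hVd hT₀0 hTT₀
      (fun s hs1 hs2 => hdrop s hs1.le (hno s hs1.le))
    have hlb2 : -(N:ℝ) ≤ lyap (φ x₀ T) := lyap_lb (hpos T (le_trans hT₀0 hTT₀))
    rw [hTdef] at hd
    simp only [← hLdef] at hd
    linarith
  obtain ⟨t₁, ht₁T₀, ht₁lt⟩ := hexists
  have ht₁0 : (0:ℝ) ≤ t₁ := le_trans hT₀0 ht₁T₀
  -- after t₁ the Lyapunov function stays below Vst
  have hbd : ∀ t, t₁ ≤ t → lyap (φ x₀ t) ≤ Vst := by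
    intro t ht
    have ht0 : (0:ℝ) ≤ t := le_trans ht₁0 ht
    set A : Set ℝ := {s | s ∈ Set.Icc t₁ t ∧ ∀ j, φ x₀ s j ≤ R₁} with hAdef
    have ht₁A : t₁ ∈ A := ⟨⟨le_rfl, ht⟩, fun j => (ht₁lt j).le⟩
    have hAbdd : BddAbove A := ⟨t, fun s hs => hs.1.2⟩
    have hφcont : ContinuousOn (φ x₀) (Set.Icc t₁ t) := fun s hs =>
      ((hode s (le_trans ht₁0 hs.1)).continuousWithinAt).mono
        (fun u hu => le_trans ht₁0 hu.1)
    have hAclosed : IsClosed A := by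
      have h1 : A = Set.Icc t₁ t ∩
          ⋂ j, (Set.Icc t₁ t ∩ (fun s => φ x₀ s j) ⁻¹' Set.Iic R₁) := by
        ext s
        constructor
        · rintro ⟨hs, hj⟩
          exact ⟨hs, Set.mem_iInter.2 fun j => ⟨hs, hj j⟩⟩
        · rintro ⟨hs, hj⟩
          exact ⟨hs, fun j => (Set.mem_iInter.1 hj j).2⟩
      rw [h1]
      refine isClosed_Icc.inter (isClosed_iInter fun j => ?_)
      exact ContinuousOn.preimage_isClosed_of_isClosed
        ((continuous_apply j).comp_continuousOn hφcont) isClosed_Icc isClosed_Iic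
    set t₃ : ℝ := sSup A with ht₃def
    have ht₃A : t₃ ∈ A := IsClosed.csSup_mem hAclosed ⟨t₁, ht₁A⟩ hAbdd
    have ht₃0 : (0:ℝ) ≤ t₃ := le_trans ht₁0 ht₃A.1.1
    have hanti := antitone_of_deriv_aux (fun s => lyap (φ x₀ s))
      (fun s => drift rn (φ x₀ s) (fun r => κ r s)) hVd ht₃0 ht₃A.1.2 ?_
    · have h2 : lyap (φ x₀ t₃) ≤ Vst := by
        rw [hVstdef]
        exact lyap_ub (hpos t₃ ht₃0) (fun j => ht₃A.2 j) hR₁1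
      linarith
    · intro s hs1 hs2
      have hsA : s ∉ A := fun hsA => absurd (le_csSup hAbdd hsA) (not_le.2 hs1)
      have hsIcc : s ∈ Set.Icc t₁ t := ⟨le_trans ht₃A.1.1 hs1.le, hs2.le⟩
      have hbig : ∃ j, R₁ ≤ φ x₀ s j := by
        by_contra hall
        push_neg at hall
        exact hsA ⟨hsIcc, fun j => (hall j).le⟩
      have := hdrop s (le_trans ht₁T₀ (le_trans ht₃A.1.1 hs1.le)) hbig
      linarith
  -- coordinatewise upper bound after t₁
  have hub : ∀ t, t₁ ≤ t → φ x₀ t i ≤ R₂ := by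
    intro t ht
    have := coord_from_lyap (hpos t (le_trans ht₁0 ht)) (hbd t ht) i
    rwa [hR₂def]
  constructor
  · -- liminf side
    calc (ρ : EReal) ≤ (δ : EReal) := by exact_mod_cast hρδ
      _ < _ := hpersist x₀ hx₀ i
  · -- limsup side
    have h1 : Filter.limsup (fun t : ℝ => ((φ x₀ t i : ℝ) : EReal)) atTop
        ≤ ((R₂ : ℝ) : EReal) := by
      apply Filter.limsup_le_of_le (by isBoundedDefault)
      filter_upwards [Filter.eventually_ge_atTop t₁] with t ht
      exact_mod_cast hub t ht
    have h2 : ((R₂ : ℝ) : EReal) < ((1 / ρ : ℝ) : EReal) := by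
      have : R₂ < 1 / ρ := by linarith
      exact_mod_cast this
    exact lt_of_le_of_lt h1 h2
end
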